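/- Let r ≥ 1, q ≥ 2, and n ≥ 2r be integers. There exists an (n,r,2)_q buffer code (binary buffer, ℓ = 2) that guarantees t = (q−1)(n−r) writes. -/
import Mathlib


/-- `IsBufferCode D E` says that the pair of maps `(D, E)` forms an `(n,r,ℓ)_q` buffer
code: whenever the encoder succeeds on symbol `a`, cell levels do not decrease, the first
buffer symbol of the new state is `a`, and the remaining buffer symbols are the previous
buffer shifted by one position. -/
structure IsBufferCode {n r l q : ℕ}
    (D : (Fin n → Fin q) → (Fin r → Fin l))
    (E : Fin l → (Fin n → Fin q) → Option (Fin n → Fin q)) : Prop where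
  mono : ∀ a x y, E a x = some y → ∀ j, x j ≤ y j
  head : ∀ a x y, E a x = some y → ∀ h : 0 < r, D y ⟨0, h⟩ = a
  shift : ∀ a x y, E a x = some y → ∀ (i : Fin r) (h : (i : ℕ) + 1 < r),
            D y ⟨(i : ℕ) + 1, h⟩ = D x i

/-- `CanWriteBuf E x s` means the sequence of symbol writes `s` can be performed starting
from cell-state vector `x`, i.e. iteratively applying the encoder never produces `none`. -/
def CanWriteBuf {n l q : ℕ} (E : Fin l → (Fin n → Fin q) → Option (Fin n → Fin q)) :
    (Fin n → Fin q) → List (Fin l) → Prop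
  | _, [] => True
  | x, a :: s => ∃ y, E a x = some y ∧ CanWriteBuf E y s

/-- The buffer code guarantees `t` writes: every sequence of at most `t` symbol writes,
starting from the all-zero cell-state vector, is accommodated without a block erasure. -/
def GuaranteesBuf {n l q : ℕ} (E : Fin l → (Fin n → Fin q) → Option (Fin n → Fin q))
    (t : ℕ) : Prop :=
  ∀ x : Fin n → Fin q, (∀ j, (x j : ℕ) = 0) →
    ∀ s : List (Fin l), s.length ≤ t → CanWriteBuf E x s

namespace MBC

/-! ### Basic schedule arithmetic -/

def tk (r b τ : ℕ) : ℕ := (τ + (r - 1 - b)) / r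

def lam (n r b v : ℕ) : ℕ := (v * (n - r) + (r - 1 - b)) / r

def gn (n r b i : ℕ) : ℕ := (r * (i - 1) + b) / (n - r) + 1

def jj (n r b i : ℕ) : ℕ := i - lam n r b (gn n r b i - 1)

def len (n r b v : ℕ) : ℕ := lam n r b v - lam n r b (v - 1)

def s0 (n r : ℕ) : ℕ := (n - r) / r
def e0 (n r : ℕ) : ℕ := (n - r) % r

def spIdx (n r b v : ℕ) : ℕ := (b + r - ((v - 1) * e0 n r) % r) % r
def spBlk (n r j v : ℕ) : ℕ := ((v - 1) * e0 n r + j) % r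

theorem tk_zero (r b : ℕ) (hb : b < r) : tk r b 0 = 0 := by
  unfold tk; apply Nat.div_eq_of_lt; omega

theorem tk_mono (r b : ℕ) {τ τ' : ℕ} (h : τ ≤ τ') : tk r b τ ≤ tk r b τ' :=
  Nat.div_le_div_right (by omega)

theorem tk_succ (r b τ : ℕ) (hr : 0 < r) (hb : b < r) :
    tk r b (τ + 1) = tk r b τ + if τ % r = b then 1 else 0 := by
  unfold tk
  have h1 : τ + 1 + (r - 1 - b) = (τ + (r - 1 - b)) + 1 := by omega
  rw [h1, Nat.succ_div]
  congr 1
  have hu : τ % r < r := Nat.mod_lt _ hr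
  have hkey : (τ + (r - 1 - b) + 1) % r = 0 ↔ τ % r = b := by
    have h2 : τ + (r - 1 - b) + 1 = τ + (r - b) := by omega
    rw [h2, ← Nat.mod_add_mod]
    by_cases hub : τ % r < b
    · rw [Nat.mod_eq_of_lt (by omega : τ % r + (r - b) < r)]
      omega
    · have h3 : τ % r + (r - b) = (τ % r - b) + r := by omega
      rw [h3, Nat.add_mod_right, Nat.mod_eq_of_lt (by omega : τ % r - b < r)]
      omega
  have hd : (r ∣ τ + (r - 1 - b) + 1) ↔ τ % r = b := by
    rw [Nat.dvd_iff_mod_eq_zero]; exact hkey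
  by_cases h : τ % r = b
  · rw [if_pos h, if_pos (hd.2 h)]
  · rw [if_neg h, if_neg (fun x => h (hd.1 x))]

theorem lam_zero (n r b : ℕ) (hb : b < r) : lam n r b 0 = 0 := by
  unfold lam
  rw [Nat.zero_mul, Nat.zero_add]
  exact Nat.div_eq_of_lt (by omega)

theorem lam_mono (n r b : ℕ) {v w : ℕ} (h : v ≤ w) : lam n r b v ≤ lam n r b w :=
  Nat.div_le_div_right (by have := Nat.mul_le_mul_right (n - r) h; omega)

theorem le_lam_iff (n r b v i : ℕ) (hr : 0 < r) (hm : r ≤ n - r) (hb : b < r) (hi : 1 ≤ i) :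
    i ≤ lam n r b v ↔ gn n r b i ≤ v := by
  obtain ⟨i', rfl⟩ : ∃ i', i = i' + 1 := ⟨i - 1, by omega⟩
  unfold lam gn
  rw [Nat.le_div_iff_mul_le hr]
  have hm0 : 0 < n - r := by omega
  have hX : (i' + 1) * r = r * i' + r := by ring
  have hsimp : i' + 1 - 1 = i' := by omega
  rw [hsimp]
  rw [show ((r * i' + b) / (n - r) + 1 ≤ v ↔ (r * i' + b) / (n - r) < v) from by omega]
  rw [Nat.div_lt_iff_lt_mul hm0]
  omega

theorem gn_pos (n r b i : ℕ) : 1 ≤ gn n r b i := Nat.le_add_left 1 _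

theorem gn_mono (n r b : ℕ) {i i' : ℕ} (h : i ≤ i') : gn n r b i ≤ gn n r b i' := by
  unfold gn
  have : r * (i - 1) + b ≤ r * (i' - 1) + b := by
    have := Nat.mul_le_mul_left r (by omega : i - 1 ≤ i' - 1); omega
  exact Nat.add_le_add_right (Nat.div_le_div_right this) 1

theorem gn_one (n r b : ℕ) (hm : r ≤ n - r) (hb : b < r) : gn n r b 1 = 1 := by
  unfold gn
  rw [show (1:ℕ) - 1 = 0 from rfl, Nat.mul_zero, Nat.zero_add]
  rw [Nat.div_eq_of_lt (by omega)]

theorem lam_gn_lt (n r b i : ℕ) (hr : 0 < r) (hm : r ≤ n - r) (hb : b < r) (hi : 1 ≤ i) :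
    lam n r b (gn n r b i - 1) < i := by
  by_contra h
  push_neg at h
  have h2 := (le_lam_iff n r b (gn n r b i - 1) i hr hm hb hi).1 h
  have := gn_pos n r b i
  omega

theorem le_lam_gn (n r b i : ℕ) (hr : 0 < r) (hm : r ≤ n - r) (hb : b < r) (hi : 1 ≤ i) :
    i ≤ lam n r b (gn n r b i) :=
  (le_lam_iff n r b (gn n r b i) i hr hm hb hi).2 le_rfl

theorem jj_pos (n r b i : ℕ) (hr : 0 < r) (hm : r ≤ n - r) (hb : b < r) (hi : 1 ≤ i) :
    1 ≤ jj n r b i := by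
  unfold jj
  have := lam_gn_lt n r b i hr hm hb hi
  omega

theorem jj_le_len (n r b i : ℕ) (hr : 0 < r) (hm : r ≤ n - r) (hb : b < r) (hi : 1 ≤ i) :
    jj n r b i ≤ len n r b (gn n r b i) := by
  unfold jj len
  have h1 := le_lam_gn n r b i hr hm hb hi
  have h2 := lam_gn_lt n r b i hr hm hb hi
  have h3 := lam_mono n r b (show gn n r b i - 1 ≤ gn n r b i by omega)
  omega

theorem jj_one (n r b : ℕ) (hr : 0 < r) (hm : r ≤ n - r) (hb : b < r) : jj n r b 1 = 1 := by
  unfold jj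
  rw [gn_one n r b hm hb]
  rw [show (1:ℕ) - 1 = 0 from rfl, lam_zero n r b hb]

/-- the complement identity linking `spIdx` with the division carry. -/
theorem amod (n r b v' : ℕ) (hr : 0 < r) (hb : b < r) :
    (v' * (n - r) + (r - 1 - b)) % r + spIdx n r b (v' + 1) = r - 1 := by
  unfold spIdx e0
  rw [show v' + 1 - 1 = v' from by omega]
  have hsplit : v' * (n - r) + (r - 1 - b)
      = (v' * ((n - r) % r) + (r - 1 - b)) + (v' * ((n - r) / r)) * r := by
    conv_lhs => rw [show n - r = r * ((n - r) / r) + (n - r) % r from (Nat.div_add_mod _ _).symm]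
    ring
  rw [hsplit, Nat.add_mul_mod_self_right, ← Nat.mod_add_mod]
  have hw : v' * ((n - r) % r) % r < r := Nat.mod_lt _ hr
  set w := v' * ((n - r) % r) % r with hwdef
  by_cases hcase : w ≤ b
  · rw [Nat.mod_eq_of_lt (by omega : w + (r - 1 - b) < r)]
    rw [show b + r - w = (b - w) + r from by omega, Nat.add_mod_right,
      Nat.mod_eq_of_lt (by omega : b - w < r)]
    omega
  · rw [show w + (r - 1 - b) = (w - 1 - b) + r from by omega, Nat.add_mod_right,
      Nat.mod_eq_of_lt (by omega : w - 1 - b < r)]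
    rw [Nat.mod_eq_of_lt (by omega : b + r - w < r)]
    omega

theorem len_eq (n r b v : ℕ) (hr : 0 < r) (hm : r ≤ n - r) (hb : b < r) (hv : 1 ≤ v) :
    len n r b v = s0 n r + if spIdx n r b v < e0 n r then 1 else 0 := by
  obtain ⟨v', rfl⟩ : ∃ v', v = v' + 1 := ⟨v - 1, by omega⟩
  have hd := amod n r b v' hr hb
  have hsp : spIdx n r b (v' + 1) < r := Nat.mod_lt _ hr
  have hM : (n - r) % r < r := Nat.mod_lt _ hr
  have key : lam n r b (v' + 1)
      = lam n r b v' + (n - r) / r + if spIdx n r b (v' + 1) < (n - r) % r then 1 else 0 := by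
    unfold lam
    have hx : (v' + 1) * (n - r) = v' * (n - r) + (n - r) := by ring
    have hdm := Nat.div_add_mod (n - r) r
    have hA : (v' + 1) * (n - r) + (r - 1 - b)
        = ((v' * (n - r) + (r - 1 - b)) + (n - r) % r) + r * ((n - r) / r) := by omega
    rw [hA, Nat.add_mul_div_left _ _ hr, Nat.add_div hr]
    rw [Nat.div_eq_of_lt hM, Nat.mod_eq_of_lt hM]
    split_ifs with h1 h2 h2 <;> omega
  unfold len s0 e0
  rw [Nat.add_sub_cancel]
  rw [key]
  by_cases hc : spIdx n r b (v' + 1) < (n - r) % r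
  · rw [if_pos hc]; generalize (n - r) / r = D; omega
  · rw [if_neg hc]; generalize (n - r) / r = D; omega

theorem len_bounds (n r b v : ℕ) (hr : 0 < r) (hm : r ≤ n - r) (hb : b < r) (hv : 1 ≤ v) :
    s0 n r ≤ len n r b v ∧ len n r b v ≤ s0 n r + 1 := by
  rw [len_eq n r b v hr hm hb hv]
  split_ifs <;> omega

theorem s0_pos (n r : ℕ) (hr : 0 < r) (hm : r ≤ n - r) : 1 ≤ s0 n r :=
  (Nat.one_le_div_iff hr).2 hm

theorem e0_lt (n r : ℕ) (hr : 0 < r) : e0 n r < r := Nat.mod_lt _ hr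

theorem spIdx_lt (n r b v : ℕ) (hr : 0 < r) : spIdx n r b v < r := Nat.mod_lt _ hr

theorem spBlk_lt (n r j v : ℕ) (hr : 0 < r) : spBlk n r j v < r := Nat.mod_lt _ hr

theorem spBlk_spIdx (n r b v : ℕ) (hr : 0 < r) (hb : b < r) :
    spBlk n r (spIdx n r b v) v = b := by
  unfold spBlk spIdx
  obtain ⟨w, hwlt, hweq⟩ : ∃ w, w < r ∧ ((v - 1) * e0 n r) % r = w :=
    ⟨_, Nat.mod_lt _ hr, rfl⟩
  rw [← Nat.mod_add_mod, hweq]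
  by_cases hcase : w ≤ b
  · rw [show b + r - w = (b - w) + r from by omega, Nat.add_mod_right,
      Nat.mod_eq_of_lt (by omega : b - w < r)]
    rw [show w + (b - w) = b from by omega, Nat.mod_eq_of_lt hb]
  · rw [Nat.mod_eq_of_lt (by omega : b + r - w < r)]
    rw [show w + (b + r - w) = b + r from by omega, Nat.add_mod_right, Nat.mod_eq_of_lt hb]

theorem spIdx_spBlk (n r j v : ℕ) (hr : 0 < r) (hj : j < r) :
    spIdx n r (spBlk n r j v) v = j := by
  unfold spBlk spIdx
  obtain ⟨w, hwlt, hweq⟩ : ∃ w, w < r ∧ ((v - 1) * e0 n r) % r = w :=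
    ⟨_, Nat.mod_lt _ hr, rfl⟩
  rw [← Nat.mod_add_mod, hweq]
  by_cases hcase : w + j < r
  · rw [Nat.mod_eq_of_lt hcase]
    rw [show w + j + r - w = j + r from by omega, Nat.add_mod_right, Nat.mod_eq_of_lt hj]
  · rw [show w + j = (w + j - r) + r from by omega, Nat.add_mod_right,
      Nat.mod_eq_of_lt (by omega : w + j - r < r)]
    rw [show w + j - r + r - w = j from by omega, Nat.mod_eq_of_lt hj]

theorem tk_le_lam (n r q b τ : ℕ) (hτ : τ ≤ (q - 1) * (n - r)) :
    tk r b τ ≤ lam n r b (q - 1) := by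
  unfold tk lam
  exact Nat.div_le_div_right (by omega)

theorem gn_le_q (n r q b i : ℕ) (hr : 0 < r) (hm : r ≤ n - r) (hb : b < r) (hi : 1 ≤ i)
    (h : i ≤ lam n r b (q - 1)) : gn n r b i ≤ q - 1 :=
  (le_lam_iff n r b (q - 1) i hr hm hb hi).1 h

/-- mid-round step: generation is unchanged, position advances. -/
theorem step_mid (n r b i : ℕ) (hr : 0 < r) (hm : r ≤ n - r) (hb : b < r) (hi : 1 ≤ i)
    (h : jj n r b i < len n r b (gn n r b i)) :
    gn n r b (i + 1) = gn n r b i ∧ jj n r b (i + 1) = jj n r b i + 1 := by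
  have h1 := le_lam_gn n r b i hr hm hb hi
  have h2 := lam_gn_lt n r b i hr hm hb hi
  have h3 := lam_mono n r b (show gn n r b i - 1 ≤ gn n r b i by omega)
  have hlt : i + 1 ≤ lam n r b (gn n r b i) := by
    unfold jj len at h; omega
  have h4 : gn n r b (i + 1) ≤ gn n r b i :=
    (le_lam_iff n r b (gn n r b i) (i + 1) hr hm hb (by omega)).1 hlt
  have h5 : gn n r b i ≤ gn n r b (i + 1) := gn_mono n r b (by omega)
  have hg : gn n r b (i + 1) = gn n r b i := le_antisymm h4 h5
  refine ⟨hg, ?_⟩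
  unfold jj
  rw [hg]
  omega

/-- boundary step: generation increments, position resets to 1. -/
theorem step_bdry (n r b i : ℕ) (hr : 0 < r) (hm : r ≤ n - r) (hb : b < r) (hi : 1 ≤ i)
    (h : jj n r b i = len n r b (gn n r b i)) :
    gn n r b (i + 1) = gn n r b i + 1 ∧ jj n r b (i + 1) = 1 := by
  have h1 := le_lam_gn n r b i hr hm hb hi
  have h2 := lam_gn_lt n r b i hr hm hb hi
  have h3 := lam_mono n r b (show gn n r b i - 1 ≤ gn n r b i by omega)
  have hieq : i = lam n r b (gn n r b i) := by
    unfold jj len at h; omega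
  have h4 : ¬ (i + 1 ≤ lam n r b (gn n r b i)) := by omega
  have h5 : gn n r b i < gn n r b (i + 1) := by
    by_contra hgg
    push_neg at hgg
    exact h4 ((le_lam_iff n r b (gn n r b i) (i + 1) hr hm hb (by omega)).2 hgg)
  have hlen1 : 1 ≤ len n r b (gn n r b i + 1) := by
    have := len_bounds n r b (gn n r b i + 1) hr hm hb (by omega)
    have := s0_pos n r hr hm
    omega
  have h6 : i + 1 ≤ lam n r b (gn n r b i + 1) := by
    have : len n r b (gn n r b i + 1) = lam n r b (gn n r b i + 1) - lam n r b (gn n r b i) := by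
      unfold len; rw [Nat.add_sub_cancel]
    have hmono := lam_mono n r b (show gn n r b i ≤ gn n r b i + 1 by omega)
    omega
  have h7 : gn n r b (i + 1) ≤ gn n r b i + 1 :=
    (le_lam_iff n r b (gn n r b i + 1) (i + 1) hr hm hb (by omega)).1 h6
  have hg : gn n r b (i + 1) = gn n r b i + 1 := by omega
  refine ⟨hg, ?_⟩
  unfold jj
  rw [hg, Nat.add_sub_cancel]
  omega


/-! ### States, representation, and the code -/

def ownCell (n r b p : ℕ) : ℕ := (s0 n r + 1) * b + p
def spCell (n r j : ℕ) : ℕ := (s0 n r + 1) * r + j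

def slotB (n r v c : ℕ) : ℕ :=
  if c < (s0 n r + 1) * r then c / (s0 n r + 1) else spBlk n r (c - (s0 n r + 1) * r) v
def slotP (n r v c : ℕ) : ℕ :=
  if c < (s0 n r + 1) * r then c % (s0 n r + 1) else s0 n r + 1

def contrib (n r : ℕ) (σ : ℕ × (ℕ → ℕ)) (v c : ℕ) : Prop :=
  0 < tk r (slotB n r v c) σ.1 ∧
    (v < gn n r (slotB n r v c) (tk r (slotB n r v c) σ.1) ∨
      (v = gn n r (slotB n r v c) (tk r (slotB n r v c) σ.1) ∧
        slotP n r v c ≤ jj n r (slotB n r v c) (tk r (slotB n r v c) σ.1) ∧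
        slotP n r v c ≠ σ.2 (slotB n r v c)))

instance contrib.dec (n r : ℕ) (σ : ℕ × (ℕ → ℕ)) (v c : ℕ) : Decidable (contrib n r σ v c) := by
  unfold contrib; infer_instance

def reprN (n r q : ℕ) (σ : ℕ × (ℕ → ℕ)) (c : ℕ) : ℕ :=
  ((Finset.range (q - 1)).filter (fun v0 => contrib n r σ (v0 + 1) c)).card

def Gfun (n r q : ℕ) (τ : ℕ) : ℕ :=
  ∑ b ∈ Finset.range r,
    (if tk r b τ = 0 then 0 else tk r b τ + gn n r b (tk r b τ) - 1)

def ValidSt (n r q : ℕ) (σ : ℕ × (ℕ → ℕ)) : Prop :=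
  σ.1 ≤ (q - 1) * (n - r) ∧
  (∀ b, r ≤ b → σ.2 b = 0) ∧
  (∀ b, b < r → (tk r b σ.1 = 0 → σ.2 b = 0) ∧
      (0 < tk r b σ.1 → σ.2 b ≤ jj n r b (tk r b σ.1))) ∧
  (∑ c ∈ Finset.range n, reprN n r q σ c) = Gfun n r q σ.1

def isBd (n r : ℕ) (σ : ℕ × (ℕ → ℕ)) : Prop :=
  tk r (σ.1 % r) σ.1 = 0
    ∨ jj n r (σ.1 % r) (tk r (σ.1 % r) σ.1)
      = len n r (σ.1 % r) (gn n r (σ.1 % r) (tk r (σ.1 % r) σ.1))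

instance isBd.dec (n r : ℕ) (σ : ℕ × (ℕ → ℕ)) : Decidable (isBd n r σ) := by
  unfold isBd; infer_instance

def newMu (n r : ℕ) (σ : ℕ × (ℕ → ℕ)) (a : Fin 2) : ℕ :=
  if isBd n r σ then (a : ℕ)
  else if (a : ℕ) = 1 then jj n r (σ.1 % r) (tk r (σ.1 % r) σ.1) + 1
  else σ.2 (σ.1 % r)

def stepSt (n r : ℕ) (σ : ℕ × (ℕ → ℕ)) (a : Fin 2) : ℕ × (ℕ → ℕ) :=
  (σ.1 + 1, Function.update σ.2 (σ.1 % r) (newMu n r σ a))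

def disp (n r : ℕ) (σ : ℕ × (ℕ → ℕ)) (b : ℕ) : Fin 2 :=
  if 0 < tk r b σ.1 ∧ σ.2 b = jj n r b (tk r b σ.1) then 1 else 0

def windowSt (n r : ℕ) (σ : ℕ × (ℕ → ℕ)) (j : ℕ) : Fin 2 :=
  disp n r σ ((σ.1 + (r - 1 - j)) % r)

/-! ### Evaluation lemmas -/

theorem n_split (n r : ℕ) (hr : 0 < r) (hrn : r ≤ n) : n = (s0 n r + 1) * r + e0 n r := by
  unfold s0 e0
  have h1 := Nat.div_add_mod (n - r) r
  have h2 : ((n - r) / r + 1) * r = r * ((n - r) / r) + r := by ring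
  omega

theorem slot_own (n r v b p : ℕ) (hb : b < r) (hp : p ≤ s0 n r) :
    slotB n r v (ownCell n r b p) = b ∧ slotP n r v (ownCell n r b p) = p := by
  unfold slotB slotP ownCell
  have hmul : (s0 n r + 1) * (b + 1) = (s0 n r + 1) * b + (s0 n r + 1) := Nat.mul_succ _ _
  have hle : (s0 n r + 1) * (b + 1) ≤ (s0 n r + 1) * r := Nat.mul_le_mul_left _ hb
  have hlt : (s0 n r + 1) * b + p < (s0 n r + 1) * r := by omega
  rw [if_pos hlt, if_pos hlt]
  constructor
  · rw [Nat.mul_add_div (by omega : 0 < s0 n r + 1), Nat.div_eq_of_lt (by omega)]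
    omega
  · rw [Nat.mul_add_mod]
    exact Nat.mod_eq_of_lt (by omega)

theorem slot_sp (n r v j : ℕ) :
    slotB n r v (spCell n r j) = spBlk n r j v ∧ slotP n r v (spCell n r j) = s0 n r + 1 := by
  unfold slotB slotP spCell
  have hge : ¬ ((s0 n r + 1) * r + j < (s0 n r + 1) * r) := by omega
  rw [if_neg hge, if_neg hge, Nat.add_sub_cancel_left]
  exact ⟨rfl, rfl⟩

theorem slotB_lt (n r v c : ℕ) (hr : 0 < r) : slotB n r v c < r := by
  unfold slotB
  split_ifs with h
  · exact Nat.div_lt_of_lt_mul h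
  · exact spBlk_lt n r _ _ hr

theorem ownCell_lt (n r b p : ℕ) (hr : 0 < r) (hrn : r ≤ n) (hb : b < r) (hp : p ≤ s0 n r) :
    ownCell n r b p < n := by
  have hs := n_split n r hr hrn
  unfold ownCell
  have hmul : (s0 n r + 1) * (b + 1) = (s0 n r + 1) * b + (s0 n r + 1) := Nat.mul_succ _ _
  have hle : (s0 n r + 1) * (b + 1) ≤ (s0 n r + 1) * r := Nat.mul_le_mul_left _ hb
  omega

theorem spCell_lt (n r j : ℕ) (hr : 0 < r) (hrn : r ≤ n) (hj : j < e0 n r) :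
    spCell n r j < n := by
  have hs := n_split n r hr hrn
  unfold spCell
  omega

theorem ownCell_inj (n r : ℕ) {b p b' p' : ℕ} (hp : p ≤ s0 n r) (hp' : p' ≤ s0 n r)
    (h : ownCell n r b p = ownCell n r b' p') : b = b' ∧ p = p' := by
  unfold ownCell at h
  rcases Nat.lt_trichotomy b b' with hlt | heq | hgt
  · exfalso
    have := Nat.mul_le_mul_left (s0 n r + 1) (show b + 1 ≤ b' from hlt)
    have hmul : (s0 n r + 1) * (b + 1) = (s0 n r + 1) * b + (s0 n r + 1) := Nat.mul_succ _ _
    omega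
  · constructor
    · exact heq
    · subst heq; omega
  · exfalso
    have := Nat.mul_le_mul_left (s0 n r + 1) (show b' + 1 ≤ b from hgt)
    have hmul : (s0 n r + 1) * (b' + 1) = (s0 n r + 1) * b' + (s0 n r + 1) := Nat.mul_succ _ _
    omega

theorem own_ne_sp (n r b p j : ℕ) (hb : b < r) (hp : p ≤ s0 n r) :
    ownCell n r b p ≠ spCell n r j := by
  unfold ownCell spCell
  intro h
  have hmul : (s0 n r + 1) * (b + 1) = (s0 n r + 1) * b + (s0 n r + 1) := Nat.mul_succ _ _
  have hle : (s0 n r + 1) * (b + 1) ≤ (s0 n r + 1) * r := Nat.mul_le_mul_left _ hb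
  omega

theorem cell_cases (n r c : ℕ) (hr : 0 < r) (hrn : r ≤ n) (hc : c < n) :
    (∃ b p, b < r ∧ p ≤ s0 n r ∧ c = ownCell n r b p) ∨
    (∃ j, j < e0 n r ∧ c = spCell n r j) := by
  have hs := n_split n r hr hrn
  by_cases h : c < (s0 n r + 1) * r
  · left
    refine ⟨c / (s0 n r + 1), c % (s0 n r + 1), Nat.div_lt_of_lt_mul h, ?_, ?_⟩
    · have := Nat.mod_lt c (show 0 < s0 n r + 1 by omega); omega
    · exact (Nat.div_add_mod c (s0 n r + 1)).symm
  · right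
    exact ⟨c - (s0 n r + 1) * r, by omega, by unfold spCell; omega⟩

theorem card_helper (q g : ℕ) (P : Prop) [Decidable P] (hg1 : 1 ≤ g) (hgq : g ≤ q - 1) :
    ((Finset.range (q - 1)).filter (fun v0 => v0 + 1 < g ∨ (v0 + 1 = g ∧ P))).card
      = (g - 1) + if P then 1 else 0 := by
  by_cases hP : P
  · rw [if_pos hP]
    have hset : (Finset.range (q - 1)).filter (fun v0 => v0 + 1 < g ∨ (v0 + 1 = g ∧ P))
        = Finset.range g := by
      ext v0
      simp only [Finset.mem_filter, Finset.mem_range]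
      constructor
      · rintro ⟨h1, h2 | ⟨h2, _⟩⟩ <;> omega
      · intro h
        refine ⟨by omega, ?_⟩
        rcases Nat.lt_or_ge (v0 + 1) g with h' | h'
        · exact Or.inl h'
        · exact Or.inr ⟨by omega, hP⟩
    rw [hset, Finset.card_range]; omega
  · rw [if_neg hP]
    have hset : (Finset.range (q - 1)).filter (fun v0 => v0 + 1 < g ∨ (v0 + 1 = g ∧ P))
        = Finset.range (g - 1) := by
      ext v0
      simp only [Finset.mem_filter, Finset.mem_range]
      constructor
      · rintro ⟨h1, h2 | ⟨h2, hp2⟩⟩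
        · omega
        · exact absurd hp2 hP
      · intro h
        exact ⟨by omega, Or.inl (by omega)⟩
    rw [hset, Finset.card_range]; omega

theorem contrib_own_iff (n r : ℕ) (σ : ℕ × (ℕ → ℕ)) (v b p : ℕ) (hb : b < r) (hp : p ≤ s0 n r)
    (hi : 0 < tk r b σ.1) :
    contrib n r σ v (ownCell n r b p) ↔
      (v < gn n r b (tk r b σ.1) ∨
        (v = gn n r b (tk r b σ.1) ∧ p ≤ jj n r b (tk r b σ.1) ∧ p ≠ σ.2 b)) := by
  unfold contrib
  rw [(slot_own n r v b p hb hp).1, (slot_own n r v b p hb hp).2]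
  exact ⟨fun h => h.2, fun h => ⟨hi, h⟩⟩

theorem reprN_own (n r q : ℕ) (σ : ℕ × (ℕ → ℕ)) (b p : ℕ) (hb : b < r) (hp : p ≤ s0 n r)
    (hi : 0 < tk r b σ.1) (hg1 : gn n r b (tk r b σ.1) ≤ q - 1) :
    reprN n r q σ (ownCell n r b p)
      = (gn n r b (tk r b σ.1) - 1)
        + if (p ≤ jj n r b (tk r b σ.1) ∧ p ≠ σ.2 b) then 1 else 0 := by
  unfold reprN
  rw [Finset.filter_congr (fun v0 _ => by
    rw [show (contrib n r σ (v0 + 1) (ownCell n r b p)) =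
      ((v0 + 1) < gn n r b (tk r b σ.1) ∨
        ((v0 + 1) = gn n r b (tk r b σ.1) ∧ p ≤ jj n r b (tk r b σ.1) ∧ p ≠ σ.2 b)) from
      propext (contrib_own_iff n r σ (v0+1) b p hb hp hi)])]
  exact card_helper q _ _ (gn_pos n r b _) hg1

theorem reprN_own_zero (n r q : ℕ) (σ : ℕ × (ℕ → ℕ)) (b p : ℕ) (hb : b < r)
    (hp : p ≤ s0 n r) (hi : tk r b σ.1 = 0) :
    reprN n r q σ (ownCell n r b p) = 0 := by
  unfold reprN
  rw [Finset.card_eq_zero, Finset.filter_eq_empty_iff]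
  intro v0 _
  unfold contrib
  rw [(slot_own n r (v0 + 1) b p hb hp).1, hi]
  simp

theorem reprN_le (n r q : ℕ) (σ : ℕ × (ℕ → ℕ)) (c : ℕ) : reprN n r q σ c ≤ q - 1 := by
  unfold reprN
  calc ((Finset.range (q - 1)).filter _).card ≤ (Finset.range (q - 1)).card :=
        Finset.card_filter_le _ _
    _ = q - 1 := Finset.card_range _

theorem reprN_zero (n r q : ℕ) (hr : 0 < r) (μ : ℕ → ℕ) (c : ℕ) :
    reprN n r q (0, μ) c = 0 := by
  unfold reprN
  rw [Finset.card_eq_zero, Finset.filter_eq_empty_iff]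
  intro v0 _
  unfold contrib
  rw [tk_zero r _ (slotB_lt n r (v0+1) c hr)]
  simp

theorem Gfun_zero (n r q : ℕ) (hr : 0 < r) : Gfun n r q 0 = 0 := by
  unfold Gfun
  apply Finset.sum_eq_zero
  intro b hb
  rw [tk_zero r b (Finset.mem_range.1 hb)]
  simp

theorem Gfun_succ (n r q τ : ℕ) (hr : 0 < r) (hm : r ≤ n - r) :
    Gfun n r q (τ + 1) = Gfun n r q τ +
      (if tk r (τ % r) τ = 0 then 1
       else if jj n r (τ % r) (tk r (τ % r) τ)
          = len n r (τ % r) (gn n r (τ % r) (tk r (τ % r) τ)) then 2 else 1) := by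
  have hB : τ % r < r := Nat.mod_lt _ hr
  have hBm : τ % r ∈ Finset.range r := Finset.mem_range.2 hB
  unfold Gfun
  rw [← Finset.add_sum_erase _ _ hBm, ← Finset.add_sum_erase _ _ hBm]
  have herase : ∑ b ∈ (Finset.range r).erase (τ % r),
      (if tk r b (τ + 1) = 0 then 0 else tk r b (τ + 1) + gn n r b (tk r b (τ + 1)) - 1)
      = ∑ b ∈ (Finset.range r).erase (τ % r),
      (if tk r b τ = 0 then 0 else tk r b τ + gn n r b (tk r b τ) - 1) := by
    apply Finset.sum_congr rfl
    intro b hbm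
    have hbne : b ≠ τ % r := (Finset.mem_erase.1 hbm).1
    have hblt : b < r := Finset.mem_range.1 (Finset.mem_erase.1 hbm).2
    have hne : ¬ (τ % r = b) := fun h => hbne h.symm
    rw [tk_succ r b τ hr hblt]
    simp only [hne, if_false, Nat.add_zero]
  rw [herase]
  have htkB : tk r (τ % r) (τ + 1) = tk r (τ % r) τ + 1 := by
    rw [tk_succ r (τ % r) τ hr hB, if_pos rfl]
  obtain ⟨i, hieq⟩ : ∃ i, tk r (τ % r) τ = i := ⟨_, rfl⟩
  rw [htkB, hieq]
  by_cases hi0 : i = 0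
  · subst hi0
    simp only [show (0:ℕ) + 1 = 1 from rfl]
    rw [if_neg (by omega : ¬ (1:ℕ) = 0)]
    simp only [if_true]
    rw [gn_one n r (τ % r) hm hB]
    omega
  · rw [if_neg hi0, if_neg (by omega : ¬ i + 1 = 0), if_neg hi0]
    have hi1 : 1 ≤ i := by omega
    have hjl := jj_le_len n r (τ % r) i hr hm hB hi1
    by_cases hbd : jj n r (τ % r) i = len n r (τ % r) (gn n r (τ % r) i)
    · rw [if_pos hbd]
      have hsb := step_bdry n r (τ % r) i hr hm hB hi1 hbd
      rw [hsb.1]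
      have := gn_pos n r (τ % r) i
      omega
    · rw [if_neg hbd]
      have hmid : jj n r (τ % r) i < len n r (τ % r) (gn n r (τ % r) i) := by omega
      have hsm := step_mid n r (τ % r) i hr hm hB hi1 hmid
      rw [hsm.1]
      have := gn_pos n r (τ % r) i
      omega

theorem Gfun_strictMono (n r q : ℕ) (hr : 0 < r) (hm : r ≤ n - r) :
    StrictMono (Gfun n r q) := by
  apply strictMono_nat_of_lt_succ
  intro τ
  rw [Gfun_succ n r q τ hr hm]
  split_ifs <;> omega


/-! ### Step-state basics -/

theorem stepSt_fst (n r : ℕ) (σ : ℕ × (ℕ → ℕ)) (a : Fin 2) :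
    (stepSt n r σ a).1 = σ.1 + 1 := rfl

theorem stepSt_snd_self (n r : ℕ) (σ : ℕ × (ℕ → ℕ)) (a : Fin 2) :
    (stepSt n r σ a).2 (σ.1 % r) = newMu n r σ a := Function.update_self _ _ _

theorem stepSt_snd_other (n r : ℕ) (σ : ℕ × (ℕ → ℕ)) (a : Fin 2) (b : ℕ)
    (hne : b ≠ σ.1 % r) : (stepSt n r σ a).2 b = σ.2 b := Function.update_of_ne hne _ _

theorem tk_step_self (n r : ℕ) (σ : ℕ × (ℕ → ℕ)) (hr : 0 < r) :
    tk r (σ.1 % r) (σ.1 + 1) = tk r (σ.1 % r) σ.1 + 1 := by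
  rw [tk_succ r _ σ.1 hr (Nat.mod_lt _ hr), if_pos rfl]

theorem tk_step_other (n r : ℕ) (σ : ℕ × (ℕ → ℕ)) (hr : 0 < r) (b : ℕ) (hb : b < r)
    (hne : b ≠ σ.1 % r) : tk r b (σ.1 + 1) = tk r b σ.1 := by
  rw [tk_succ r b σ.1 hr hb, if_neg (fun h => hne h.symm)]
  omega

theorem contrib_step_other (n r : ℕ) (hr : 0 < r) (σ : ℕ × (ℕ → ℕ)) (a : Fin 2) (v c : ℕ)
    (hne : slotB n r v c ≠ σ.1 % r) :
    contrib n r (stepSt n r σ a) v c ↔ contrib n r σ v c := by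
  unfold contrib
  rw [stepSt_fst, tk_step_other n r σ hr _ (slotB_lt n r v c hr) hne,
    stepSt_snd_other n r σ a _ hne]

theorem reprN_congr (n r q : ℕ) (σ σ' : ℕ × (ℕ → ℕ)) (c : ℕ)
    (h : ∀ v0 ∈ Finset.range (q - 1), (contrib n r σ' (v0 + 1) c ↔ contrib n r σ (v0 + 1) c)) :
    reprN n r q σ' c = reprN n r q σ c := by
  unfold reprN
  exact congrArg Finset.card (Finset.filter_congr h)

theorem card_filter_insert {α : Type*} [DecidableEq α] (s : Finset α) (p p' : α → Prop)
    [DecidablePred p] [DecidablePred p'] (x : α) (hx : x ∈ s) (hpx' : p' x) (hpx : ¬ p x)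
    (h : ∀ y ∈ s, y ≠ x → (p' y ↔ p y)) :
    (s.filter p').card = (s.filter p).card + 1 := by
  have hset : s.filter p' = insert x (s.filter p) := by
    ext y
    simp only [Finset.mem_insert, Finset.mem_filter]
    constructor
    · rintro ⟨hy, hpy⟩
      by_cases hyx : y = x
      · exact Or.inl hyx
      · exact Or.inr ⟨hy, (h y hy hyx).1 hpy⟩
    · rintro (rfl | ⟨hy, hpy⟩)
      · exact ⟨hx, hpx'⟩
      · by_cases hyx : y = x
        · subst hyx; exact absurd hpy hpx
        · exact ⟨hy, (h y hy hyx).2 hpy⟩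
  rw [hset, Finset.card_insert_of_notMem (by
    simp only [Finset.mem_filter]
    exact fun hh => hpx hh.2)]

theorem reprN_insert (n r q : ℕ) (σ σ' : ℕ × (ℕ → ℕ)) (c : ℕ) (w : ℕ)
    (hw : w ∈ Finset.range (q - 1))
    (hnew : contrib n r σ' (w + 1) c) (hold : ¬ contrib n r σ (w + 1) c)
    (h : ∀ v0 ∈ Finset.range (q - 1), v0 ≠ w →
      (contrib n r σ' (v0 + 1) c ↔ contrib n r σ (v0 + 1) c)) :
    reprN n r q σ' c = reprN n r q σ c + 1 := by
  unfold reprN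
  exact card_filter_insert _ _ _ w hw hnew hold h


theorem newMu_bd (n r : ℕ) (σ : ℕ × (ℕ → ℕ)) (a : Fin 2) (h : isBd n r σ) :
    newMu n r σ a = (a : ℕ) := if_pos h

theorem newMu_mid1 (n r : ℕ) (σ : ℕ × (ℕ → ℕ)) (a : Fin 2) (h : ¬ isBd n r σ)
    (ha : (a : ℕ) = 1) :
    newMu n r σ a = jj n r (σ.1 % r) (tk r (σ.1 % r) σ.1) + 1 := by
  unfold newMu; rw [if_neg h, if_pos ha]

theorem newMu_mid0 (n r : ℕ) (σ : ℕ × (ℕ → ℕ)) (a : Fin 2) (h : ¬ isBd n r σ)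
    (ha : (a : ℕ) = 0) :
    newMu n r σ a = σ.2 (σ.1 % r) := by
  unfold newMu; rw [if_neg h, if_neg (by omega)]

/-- Case: very first write of the block. -/
theorem diff_virgin (n r q : ℕ) (hr : 0 < r) (hm : r ≤ n - r) (hq : 2 ≤ q)
    (σ : ℕ × (ℕ → ℕ)) (a : Fin 2)
    (hi : tk r (σ.1 % r) σ.1 = 0) (c : ℕ) (hc : c < n) :
    reprN n r q (stepSt n r σ a) c
      = reprN n r q σ c
        + (if c = ownCell n r (σ.1 % r) (1 - (a : ℕ)) then 1 else 0) := by
  have hB : σ.1 % r < r := Nat.mod_lt _ hr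
  have hrn : r ≤ n := by omega
  have ha2 : (a : ℕ) < 2 := a.isLt
  have hs1 : 1 ≤ s0 n r := s0_pos n r hr hm
  have hbd : isBd n r σ := Or.inl hi
  have htk' : tk r (σ.1 % r) (σ.1 + 1) = 1 := by
    rw [tk_step_self n r σ hr, hi]
  have hμ' : (stepSt n r σ a).2 (σ.1 % r) = (a : ℕ) := by
    rw [stepSt_snd_self, newMu_bd n r σ a hbd]
  rcases cell_cases n r c hr hrn hc with ⟨b, p, hb, hp, rfl⟩ | ⟨j, hj, rfl⟩
  · by_cases hbB : b = σ.1 % r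
    · subst hbB
      rw [reprN_own_zero n r q σ (σ.1 % r) p hb hp hi]
      rw [reprN_own n r q (stepSt n r σ a) (σ.1 % r) p hb hp
        (by rw [stepSt_fst, htk']; omega)
        (by rw [stepSt_fst, htk', gn_one n r (σ.1 % r) hm hb]; omega)]
      rw [stepSt_fst, htk', gn_one n r (σ.1 % r) hm hb, jj_one n r (σ.1 % r) hr hm hb, hμ']
      by_cases hpa : p = 1 - (a : ℕ)
      · rw [if_pos (show p ≤ 1 ∧ p ≠ (a : ℕ) by omega),
          if_pos (by rw [hpa])]
      · rw [if_neg (show ¬ (p ≤ 1 ∧ p ≠ (a : ℕ)) by omega),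
          if_neg (fun h => hpa (ownCell_inj n r hp (by omega) h).2)]
    · rw [reprN_congr n r q σ (stepSt n r σ a) _ (fun v0 _ => by
        refine contrib_step_other n r hr σ a (v0 + 1) _ ?_
        rw [(slot_own n r (v0 + 1) b p hb hp).1]
        exact hbB)]
      rw [if_neg (fun h => hbB (ownCell_inj n r hp (by omega) h).1)]
      omega
  · rw [reprN_congr n r q σ (stepSt n r σ a) _ (fun v0 _ => by
      by_cases hbv : spBlk n r j (v0 + 1) = σ.1 % r
      · unfold contrib
        rw [(slot_sp n r (v0 + 1) j).1, (slot_sp n r (v0 + 1) j).2, hbv, stepSt_fst,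
          htk', hi, hμ', gn_one n r (σ.1 % r) hm hB, jj_one n r (σ.1 % r) hr hm hB]
        constructor
        · rintro ⟨h1, h2 | ⟨h2, h3, h4⟩⟩ <;> omega
        · rintro ⟨h1, _⟩; omega
      · exact contrib_step_other n r hr σ a (v0 + 1) _ (by
          rw [(slot_sp n r (v0 + 1) j).1]; exact hbv))]
    rw [if_neg (fun h => own_ne_sp n r (σ.1 % r) (1 - (a : ℕ)) j hB (by omega) h.symm)]
    omega


def slotCell (n r : ℕ) (b v p : ℕ) : ℕ :=
  if p ≤ s0 n r then ownCell n r b p else spCell n r (spIdx n r b v)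

theorem spCell_inj (n r : ℕ) {j j' : ℕ} (h : spCell n r j = spCell n r j') : j = j' := by
  unfold spCell at h; omega

/-- Case: mid-round write of a `1`. -/
theorem diff_mid1 (n r q : ℕ) (hr : 0 < r) (hm : r ≤ n - r) (hq : 2 ≤ q)
    (σ : ℕ × (ℕ → ℕ)) (a : Fin 2) (ha : (a : ℕ) = 1)
    (hval : ValidSt n r q σ)
    (hi : 0 < tk r (σ.1 % r) σ.1)
    (hmid : jj n r (σ.1 % r) (tk r (σ.1 % r) σ.1)
      < len n r (σ.1 % r) (gn n r (σ.1 % r) (tk r (σ.1 % r) σ.1)))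
    (c : ℕ) (hc : c < n) :
    reprN n r q (stepSt n r σ a) c
      = reprN n r q σ c
        + (if c = ownCell n r (σ.1 % r) (σ.2 (σ.1 % r)) then 1 else 0) := by
  have hB : σ.1 % r < r := Nat.mod_lt _ hr
  have hrn : r ≤ n := by omega
  have hs1 : 1 ≤ s0 n r := s0_pos n r hr hm
  have hnb : ¬ isBd n r σ := by
    unfold isBd; rintro (h | h) <;> omega
  have htk' : tk r (σ.1 % r) (σ.1 + 1) = tk r (σ.1 % r) σ.1 + 1 := tk_step_self n r σ hr
  have hsm := step_mid n r (σ.1 % r) (tk r (σ.1 % r) σ.1) hr hm hB hi hmid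
  have hgq : gn n r (σ.1 % r) (tk r (σ.1 % r) σ.1) ≤ q - 1 :=
    gn_le_q n r q (σ.1 % r) _ hr hm hB hi (tk_le_lam n r q (σ.1 % r) σ.1 hval.1)
  have hμJ : σ.2 (σ.1 % r) ≤ jj n r (σ.1 % r) (tk r (σ.1 % r) σ.1) :=
    (hval.2.2.1 (σ.1 % r) hB).2 hi
  have hlen := len_bounds n r (σ.1 % r) (gn n r (σ.1 % r) (tk r (σ.1 % r) σ.1)) hr hm hB
    (gn_pos n r (σ.1 % r) _)
  have hJs : jj n r (σ.1 % r) (tk r (σ.1 % r) σ.1) ≤ s0 n r := by omega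
  have hμs : σ.2 (σ.1 % r) ≤ s0 n r := by omega
  have hμ' : (stepSt n r σ a).2 (σ.1 % r) = jj n r (σ.1 % r) (tk r (σ.1 % r) σ.1) + 1 := by
    rw [stepSt_snd_self, newMu_mid1 n r σ a hnb ha]
  rcases cell_cases n r c hr hrn hc with ⟨b, p, hb, hp, rfl⟩ | ⟨j, hj, rfl⟩
  · by_cases hbB : b = σ.1 % r
    · subst hbB
      rw [reprN_own n r q σ (σ.1 % r) p hb hp hi hgq]
      rw [reprN_own n r q (stepSt n r σ a) (σ.1 % r) p hb hp
        (by rw [stepSt_fst, htk']; omega)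
        (by rw [stepSt_fst, htk', hsm.1]; exact hgq)]
      rw [stepSt_fst, htk', hsm.1, hsm.2, hμ']
      have hiff : (ownCell n r (σ.1 % r) p = ownCell n r (σ.1 % r) (σ.2 (σ.1 % r)))
          ↔ (p = σ.2 (σ.1 % r)) :=
        ⟨fun h => (ownCell_inj n r hp hμs h).2, fun h => by rw [h]⟩
      simp only [hiff]
      split_ifs <;> omega
    · rw [reprN_congr n r q σ (stepSt n r σ a) _ (fun v0 _ => by
        refine contrib_step_other n r hr σ a (v0 + 1) _ ?_
        rw [(slot_own n r (v0 + 1) b p hb hp).1]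
        exact hbB)]
      rw [if_neg (fun h => hbB (ownCell_inj n r hp hμs h).1)]
      omega
  · rw [reprN_congr n r q σ (stepSt n r σ a) _ (fun v0 _ => by
      by_cases hbv : spBlk n r j (v0 + 1) = σ.1 % r
      · unfold contrib
        rw [(slot_sp n r (v0 + 1) j).1, (slot_sp n r (v0 + 1) j).2, hbv, stepSt_fst,
          htk', hsm.1, hsm.2, hμ']
        omega
      · exact contrib_step_other n r hr σ a (v0 + 1) _ (by
          rw [(slot_sp n r (v0 + 1) j).1]; exact hbv))]
    rw [if_neg (fun h => own_ne_sp n r (σ.1 % r) (σ.2 (σ.1 % r)) j hB hμs h.symm)]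
    omega


/-- Case: mid-round write of a `0`. -/
theorem diff_mid0 (n r q : ℕ) (hr : 0 < r) (hm : r ≤ n - r) (hq : 2 ≤ q)
    (σ : ℕ × (ℕ → ℕ)) (a : Fin 2) (ha : (a : ℕ) = 0)
    (hval : ValidSt n r q σ)
    (hi : 0 < tk r (σ.1 % r) σ.1)
    (hmid : jj n r (σ.1 % r) (tk r (σ.1 % r) σ.1)
      < len n r (σ.1 % r) (gn n r (σ.1 % r) (tk r (σ.1 % r) σ.1)))
    (c : ℕ) (hc : c < n) :
    reprN n r q (stepSt n r σ a) c
      = reprN n r q σ c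
        + (if c = slotCell n r (σ.1 % r) (gn n r (σ.1 % r) (tk r (σ.1 % r) σ.1))
              (jj n r (σ.1 % r) (tk r (σ.1 % r) σ.1) + 1) then 1 else 0) := by
  have hB : σ.1 % r < r := Nat.mod_lt _ hr
  have hrn : r ≤ n := by omega
  have hs1 : 1 ≤ s0 n r := s0_pos n r hr hm
  have he0r : e0 n r < r := e0_lt n r hr
  have hnb : ¬ isBd n r σ := by
    unfold isBd; rintro (h | h) <;> omega
  have htk' : tk r (σ.1 % r) (σ.1 + 1) = tk r (σ.1 % r) σ.1 + 1 := tk_step_self n r σ hr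
  have hsm := step_mid n r (σ.1 % r) (tk r (σ.1 % r) σ.1) hr hm hB hi hmid
  have hgq : gn n r (σ.1 % r) (tk r (σ.1 % r) σ.1) ≤ q - 1 :=
    gn_le_q n r q (σ.1 % r) _ hr hm hB hi (tk_le_lam n r q (σ.1 % r) σ.1 hval.1)
  have hg1 : 1 ≤ gn n r (σ.1 % r) (tk r (σ.1 % r) σ.1) := gn_pos n r (σ.1 % r) _
  have hμJ : σ.2 (σ.1 % r) ≤ jj n r (σ.1 % r) (tk r (σ.1 % r) σ.1) :=
    (hval.2.2.1 (σ.1 % r) hB).2 hi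
  have hlen := len_bounds n r (σ.1 % r) (gn n r (σ.1 % r) (tk r (σ.1 % r) σ.1)) hr hm hB hg1
  have hJs : jj n r (σ.1 % r) (tk r (σ.1 % r) σ.1) ≤ s0 n r := by omega
  have hμs : σ.2 (σ.1 % r) ≤ s0 n r := by omega
  have hJ1 : 1 ≤ jj n r (σ.1 % r) (tk r (σ.1 % r) σ.1) :=
    jj_pos n r (σ.1 % r) _ hr hm hB hi
  have hμ' : (stepSt n r σ a).2 (σ.1 % r) = σ.2 (σ.1 % r) := by
    rw [stepSt_snd_self, newMu_mid0 n r σ a hnb ha]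
  by_cases hJt : jj n r (σ.1 % r) (tk r (σ.1 % r) σ.1) + 1 ≤ s0 n r
  · -- the new slot is an own cell
    rw [show slotCell n r (σ.1 % r) (gn n r (σ.1 % r) (tk r (σ.1 % r) σ.1))
        (jj n r (σ.1 % r) (tk r (σ.1 % r) σ.1) + 1)
        = ownCell n r (σ.1 % r) (jj n r (σ.1 % r) (tk r (σ.1 % r) σ.1) + 1) from by
      unfold slotCell; rw [if_pos hJt]]
    rcases cell_cases n r c hr hrn hc with ⟨b, p, hb, hp, rfl⟩ | ⟨j, hj, rfl⟩
    · by_cases hbB : b = σ.1 % r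
      · subst hbB
        rw [reprN_own n r q σ (σ.1 % r) p hb hp hi hgq]
        rw [reprN_own n r q (stepSt n r σ a) (σ.1 % r) p hb hp
          (by rw [stepSt_fst, htk']; omega)
          (by rw [stepSt_fst, htk', hsm.1]; exact hgq)]
        rw [stepSt_fst, htk', hsm.1, hsm.2, hμ']
        have hiff : (ownCell n r (σ.1 % r) p
            = ownCell n r (σ.1 % r) (jj n r (σ.1 % r) (tk r (σ.1 % r) σ.1) + 1))
            ↔ (p = jj n r (σ.1 % r) (tk r (σ.1 % r) σ.1) + 1) :=
          ⟨fun h => (ownCell_inj n r hp hJt h).2, fun h => by rw [h]⟩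
        simp only [hiff]
        split_ifs <;> omega
      · rw [reprN_congr n r q σ (stepSt n r σ a) _ (fun v0 _ => by
          refine contrib_step_other n r hr σ a (v0 + 1) _ ?_
          rw [(slot_own n r (v0 + 1) b p hb hp).1]
          exact hbB)]
        rw [if_neg (fun h => hbB (ownCell_inj n r hp hJt h).1)]
        omega
    · rw [reprN_congr n r q σ (stepSt n r σ a) _ (fun v0 _ => by
        by_cases hbv : spBlk n r j (v0 + 1) = σ.1 % r
        · unfold contrib
          rw [(slot_sp n r (v0 + 1) j).1, (slot_sp n r (v0 + 1) j).2, hbv, stepSt_fst,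
            htk', hsm.1, hsm.2, hμ']
          omega
        · exact contrib_step_other n r hr σ a (v0 + 1) _ (by
            rw [(slot_sp n r (v0 + 1) j).1]; exact hbv))]
      rw [if_neg (fun h =>
        own_ne_sp n r (σ.1 % r) (jj n r (σ.1 % r) (tk r (σ.1 % r) σ.1) + 1) j hB hJt h.symm)]
      omega
  · -- the new slot is the spare cell
    have hJtop : jj n r (σ.1 % r) (tk r (σ.1 % r) σ.1) = s0 n r := by omega
    have hlen1 : len n r (σ.1 % r) (gn n r (σ.1 % r) (tk r (σ.1 % r) σ.1)) = s0 n r + 1 := by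
      omega
    have hhas : spIdx n r (σ.1 % r) (gn n r (σ.1 % r) (tk r (σ.1 % r) σ.1)) < e0 n r := by
      have := len_eq n r (σ.1 % r) (gn n r (σ.1 % r) (tk r (σ.1 % r) σ.1)) hr hm hB hg1
      by_contra hcon
      rw [if_neg hcon] at this
      omega
    rw [show slotCell n r (σ.1 % r) (gn n r (σ.1 % r) (tk r (σ.1 % r) σ.1))
        (jj n r (σ.1 % r) (tk r (σ.1 % r) σ.1) + 1)
        = spCell n r (spIdx n r (σ.1 % r) (gn n r (σ.1 % r) (tk r (σ.1 % r) σ.1))) from by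
      unfold slotCell; rw [if_neg hJt]]
    rcases cell_cases n r c hr hrn hc with ⟨b, p, hb, hp, rfl⟩ | ⟨j, hj, rfl⟩
    · by_cases hbB : b = σ.1 % r
      · subst hbB
        rw [reprN_own n r q σ (σ.1 % r) p hb hp hi hgq]
        rw [reprN_own n r q (stepSt n r σ a) (σ.1 % r) p hb hp
          (by rw [stepSt_fst, htk']; omega)
          (by rw [stepSt_fst, htk', hsm.1]; exact hgq)]
        rw [stepSt_fst, htk', hsm.1, hsm.2, hμ']
        rw [if_neg (fun h => own_ne_sp n r (σ.1 % r) p _ hb hp h)]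
        split_ifs <;> omega
      · rw [reprN_congr n r q σ (stepSt n r σ a) _ (fun v0 _ => by
          refine contrib_step_other n r hr σ a (v0 + 1) _ ?_
          rw [(slot_own n r (v0 + 1) b p hb hp).1]
          exact hbB)]
        rw [if_neg (fun h => own_ne_sp n r b p _ hb hp h)]
        omega
    · by_cases hjsp : j = spIdx n r (σ.1 % r) (gn n r (σ.1 % r) (tk r (σ.1 % r) σ.1))
      · subst hjsp
        have hblk : spBlk n r (spIdx n r (σ.1 % r) (gn n r (σ.1 % r) (tk r (σ.1 % r) σ.1)))
            (gn n r (σ.1 % r) (tk r (σ.1 % r) σ.1)) = σ.1 % r :=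
          spBlk_spIdx n r (σ.1 % r) _ hr hB
        rw [reprN_insert n r q σ (stepSt n r σ a) _
          (gn n r (σ.1 % r) (tk r (σ.1 % r) σ.1) - 1)
          (Finset.mem_range.2 (by omega))
          (by
            rw [show gn n r (σ.1 % r) (tk r (σ.1 % r) σ.1) - 1 + 1
              = gn n r (σ.1 % r) (tk r (σ.1 % r) σ.1) from by omega]
            unfold contrib
            rw [(slot_sp n r _ _).1, (slot_sp n r _ _).2, hblk, stepSt_fst,
              htk', hsm.1, hsm.2, hμ']
            omega)
          (by
            rw [show gn n r (σ.1 % r) (tk r (σ.1 % r) σ.1) - 1 + 1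
              = gn n r (σ.1 % r) (tk r (σ.1 % r) σ.1) from by omega]
            unfold contrib
            rw [(slot_sp n r _ _).1, (slot_sp n r _ _).2, hblk]
            omega)
          (fun v0 _ hv0 => by
            by_cases hbv : spBlk n r (spIdx n r (σ.1 % r)
                (gn n r (σ.1 % r) (tk r (σ.1 % r) σ.1))) (v0 + 1) = σ.1 % r
            · have hvne : v0 + 1 ≠ gn n r (σ.1 % r) (tk r (σ.1 % r) σ.1) := by omega
              unfold contrib
              rw [(slot_sp n r _ _).1, (slot_sp n r _ _).2, hbv, stepSt_fst,
                htk', hsm.1, hsm.2, hμ']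
              omega
            · exact contrib_step_other n r hr σ a (v0 + 1) _ (by
                rw [(slot_sp n r _ _).1]; exact hbv))]
        rw [if_pos rfl]
      · rw [reprN_congr n r q σ (stepSt n r σ a) _ (fun v0 _ => by
          by_cases hbv : spBlk n r j (v0 + 1) = σ.1 % r
          · have hvne : v0 + 1 ≠ gn n r (σ.1 % r) (tk r (σ.1 % r) σ.1) := by
              intro hveq
              apply hjsp
              rw [← spIdx_spBlk n r j (v0 + 1) hr (by omega), hbv, hveq]
            unfold contrib
            rw [(slot_sp n r (v0 + 1) j).1, (slot_sp n r (v0 + 1) j).2, hbv, stepSt_fst,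
              htk', hsm.1, hsm.2, hμ']
            omega
          · exact contrib_step_other n r hr σ a (v0 + 1) _ (by
              rw [(slot_sp n r (v0 + 1) j).1]; exact hbv))]
        rw [if_neg (fun h => hjsp (spCell_inj n r h))]
        omega


/-- Case: boundary write (round complete, start next generation). -/
theorem diff_bdry (n r q : ℕ) (hr : 0 < r) (hm : r ≤ n - r) (hq : 2 ≤ q)
    (σ : ℕ × (ℕ → ℕ)) (a : Fin 2)
    (hval : ValidSt n r q σ) (hτ : σ.1 < (q - 1) * (n - r))
    (hi : 0 < tk r (σ.1 % r) σ.1)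
    (hbdj : jj n r (σ.1 % r) (tk r (σ.1 % r) σ.1)
      = len n r (σ.1 % r) (gn n r (σ.1 % r) (tk r (σ.1 % r) σ.1)))
    (c : ℕ) (hc : c < n) :
    reprN n r q (stepSt n r σ a) c
      = reprN n r q σ c
        + ((if c = slotCell n r (σ.1 % r) (gn n r (σ.1 % r) (tk r (σ.1 % r) σ.1))
              (σ.2 (σ.1 % r)) then 1 else 0)
          + (if c = ownCell n r (σ.1 % r) (1 - (a : ℕ)) then 1 else 0)) := by
  have hB : σ.1 % r < r := Nat.mod_lt _ hr
  have hrn : r ≤ n := by omega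
  have ha2 : (a : ℕ) < 2 := a.isLt
  have hs1 : 1 ≤ s0 n r := s0_pos n r hr hm
  have he0r : e0 n r < r := e0_lt n r hr
  have hbd : isBd n r σ := Or.inr hbdj
  have htk' : tk r (σ.1 % r) (σ.1 + 1) = tk r (σ.1 % r) σ.1 + 1 := tk_step_self n r σ hr
  have hsb := step_bdry n r (σ.1 % r) (tk r (σ.1 % r) σ.1) hr hm hB hi hbdj
  have hg1 : 1 ≤ gn n r (σ.1 % r) (tk r (σ.1 % r) σ.1) := gn_pos n r (σ.1 % r) _
  have hgq : gn n r (σ.1 % r) (tk r (σ.1 % r) σ.1) ≤ q - 1 :=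
    gn_le_q n r q (σ.1 % r) _ hr hm hB hi (tk_le_lam n r q (σ.1 % r) σ.1 (by omega))
  have hgq' : gn n r (σ.1 % r) (tk r (σ.1 % r) σ.1) + 1 ≤ q - 1 := by
    have h1 : tk r (σ.1 % r) (σ.1 + 1) ≤ lam n r (σ.1 % r) (q - 1) :=
      tk_le_lam n r q (σ.1 % r) (σ.1 + 1) (by omega)
    have h2 := gn_le_q n r q (σ.1 % r) (tk r (σ.1 % r) σ.1 + 1) hr hm hB (by omega)
      (by rw [← htk']; exact h1)
    omega
  have hμJ : σ.2 (σ.1 % r) ≤ jj n r (σ.1 % r) (tk r (σ.1 % r) σ.1) :=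
    (hval.2.2.1 (σ.1 % r) hB).2 hi
  have hlen := len_bounds n r (σ.1 % r) (gn n r (σ.1 % r) (tk r (σ.1 % r) σ.1)) hr hm hB hg1
  have hJtop : s0 n r ≤ jj n r (σ.1 % r) (tk r (σ.1 % r) σ.1) := by omega
  have hJs1 : jj n r (σ.1 % r) (tk r (σ.1 % r) σ.1) ≤ s0 n r + 1 := by omega
  have hμ' : (stepSt n r σ a).2 (σ.1 % r) = (a : ℕ) := by
    rw [stepSt_snd_self, newMu_bd n r σ a hbd]
  by_cases hμcase : σ.2 (σ.1 % r) ≤ s0 n r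
  · -- the pending slot is an own cell
    rw [show slotCell n r (σ.1 % r) (gn n r (σ.1 % r) (tk r (σ.1 % r) σ.1)) (σ.2 (σ.1 % r))
        = ownCell n r (σ.1 % r) (σ.2 (σ.1 % r)) from by
      unfold slotCell; rw [if_pos hμcase]]
    rcases cell_cases n r c hr hrn hc with ⟨b, p, hb, hp, rfl⟩ | ⟨j, hj, rfl⟩
    · by_cases hbB : b = σ.1 % r
      · subst hbB
        rw [reprN_own n r q σ (σ.1 % r) p hb hp hi hgq]
        rw [reprN_own n r q (stepSt n r σ a) (σ.1 % r) p hb hp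
          (by rw [stepSt_fst, htk']; omega)
          (by rw [stepSt_fst, htk', hsb.1]; omega)]
        rw [stepSt_fst, htk', hsb.1, hsb.2, hμ']
        have hiff1 : (ownCell n r (σ.1 % r) p = ownCell n r (σ.1 % r) (σ.2 (σ.1 % r)))
            ↔ (p = σ.2 (σ.1 % r)) :=
          ⟨fun h => (ownCell_inj n r hp hμcase h).2, fun h => by rw [h]⟩
        have hiff2 : (ownCell n r (σ.1 % r) p = ownCell n r (σ.1 % r) (1 - (a : ℕ)))
            ↔ (p = 1 - (a : ℕ)) :=
          ⟨fun h => (ownCell_inj n r hp (by omega) h).2, fun h => by rw [h]⟩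
        simp only [hiff1, hiff2]
        have hpJ : p ≤ jj n r (σ.1 % r) (tk r (σ.1 % r) σ.1) := by omega
        split_ifs <;> omega
      · rw [reprN_congr n r q σ (stepSt n r σ a) _ (fun v0 _ => by
          refine contrib_step_other n r hr σ a (v0 + 1) _ ?_
          rw [(slot_own n r (v0 + 1) b p hb hp).1]
          exact hbB)]
        rw [if_neg (fun h => hbB (ownCell_inj n r hp hμcase h).1),
          if_neg (fun h => hbB (ownCell_inj n r hp (by omega) h).1)]
        omega
    · rw [reprN_congr n r q σ (stepSt n r σ a) _ (fun v0 _ => by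
        by_cases hbv : spBlk n r j (v0 + 1) = σ.1 % r
        · unfold contrib
          rw [(slot_sp n r (v0 + 1) j).1, (slot_sp n r (v0 + 1) j).2, hbv, stepSt_fst,
            htk', hsb.1, hsb.2, hμ']
          by_cases hveq : v0 + 1 = gn n r (σ.1 % r) (tk r (σ.1 % r) σ.1)
          · have hjid : j = spIdx n r (σ.1 % r) (gn n r (σ.1 % r) (tk r (σ.1 % r) σ.1)) := by
              rw [← spIdx_spBlk n r j (v0 + 1) hr (by omega), hbv, hveq]
            have hsplt : spIdx n r (σ.1 % r) (gn n r (σ.1 % r) (tk r (σ.1 % r) σ.1))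
                < e0 n r := by rw [← hjid]; exact hj
            have hlenv := len_eq n r (σ.1 % r) (gn n r (σ.1 % r) (tk r (σ.1 % r) σ.1))
              hr hm hB hg1
            rw [if_pos hsplt] at hlenv
            omega
          · omega
        · exact contrib_step_other n r hr σ a (v0 + 1) _ (by
            rw [(slot_sp n r (v0 + 1) j).1]; exact hbv))]
      rw [if_neg (fun h => own_ne_sp n r (σ.1 % r) (σ.2 (σ.1 % r)) j hB hμcase h.symm),
        if_neg (fun h => own_ne_sp n r (σ.1 % r) (1 - (a : ℕ)) j hB (by omega) h.symm)]
      omega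
  · -- the pending slot is the spare cell
    have hμtop : σ.2 (σ.1 % r) = s0 n r + 1 := by omega
    have hJlen1 : jj n r (σ.1 % r) (tk r (σ.1 % r) σ.1) = s0 n r + 1 := by omega
    have hhas : spIdx n r (σ.1 % r) (gn n r (σ.1 % r) (tk r (σ.1 % r) σ.1)) < e0 n r := by
      have := len_eq n r (σ.1 % r) (gn n r (σ.1 % r) (tk r (σ.1 % r) σ.1)) hr hm hB hg1
      by_contra hcon
      rw [if_neg hcon] at this
      omega
    rw [show slotCell n r (σ.1 % r) (gn n r (σ.1 % r) (tk r (σ.1 % r) σ.1)) (σ.2 (σ.1 % r))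
        = spCell n r (spIdx n r (σ.1 % r) (gn n r (σ.1 % r) (tk r (σ.1 % r) σ.1))) from by
      unfold slotCell; rw [if_neg hμcase]]
    rcases cell_cases n r c hr hrn hc with ⟨b, p, hb, hp, rfl⟩ | ⟨j, hj, rfl⟩
    · by_cases hbB : b = σ.1 % r
      · subst hbB
        rw [reprN_own n r q σ (σ.1 % r) p hb hp hi hgq]
        rw [reprN_own n r q (stepSt n r σ a) (σ.1 % r) p hb hp
          (by rw [stepSt_fst, htk']; omega)
          (by rw [stepSt_fst, htk', hsb.1]; omega)]
        rw [stepSt_fst, htk', hsb.1, hsb.2, hμ']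
        rw [if_neg (fun h => own_ne_sp n r (σ.1 % r) p _ hb hp h)]
        have hiff2 : (ownCell n r (σ.1 % r) p = ownCell n r (σ.1 % r) (1 - (a : ℕ)))
            ↔ (p = 1 - (a : ℕ)) :=
          ⟨fun h => (ownCell_inj n r hp (by omega) h).2, fun h => by rw [h]⟩
        simp only [hiff2]
        have hpJ : p ≤ jj n r (σ.1 % r) (tk r (σ.1 % r) σ.1) := by omega
        have hpμ : p ≠ σ.2 (σ.1 % r) := by omega
        split_ifs <;> omega
      · rw [reprN_congr n r q σ (stepSt n r σ a) _ (fun v0 _ => by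
          refine contrib_step_other n r hr σ a (v0 + 1) _ ?_
          rw [(slot_own n r (v0 + 1) b p hb hp).1]
          exact hbB)]
        rw [if_neg (fun h => own_ne_sp n r b p _ hb hp h),
          if_neg (fun h => hbB (ownCell_inj n r hp (by omega) h).1)]
        omega
    · by_cases hjsp : j = spIdx n r (σ.1 % r) (gn n r (σ.1 % r) (tk r (σ.1 % r) σ.1))
      · subst hjsp
        have hblk : spBlk n r (spIdx n r (σ.1 % r) (gn n r (σ.1 % r) (tk r (σ.1 % r) σ.1)))
            (gn n r (σ.1 % r) (tk r (σ.1 % r) σ.1)) = σ.1 % r :=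
          spBlk_spIdx n r (σ.1 % r) _ hr hB
        rw [reprN_insert n r q σ (stepSt n r σ a) _
          (gn n r (σ.1 % r) (tk r (σ.1 % r) σ.1) - 1)
          (Finset.mem_range.2 (by omega))
          (by
            rw [show gn n r (σ.1 % r) (tk r (σ.1 % r) σ.1) - 1 + 1
              = gn n r (σ.1 % r) (tk r (σ.1 % r) σ.1) from by omega]
            unfold contrib
            rw [(slot_sp n r _ _).1, (slot_sp n r _ _).2, hblk, stepSt_fst,
              htk', hsb.1, hsb.2, hμ']
            omega)
          (by
            rw [show gn n r (σ.1 % r) (tk r (σ.1 % r) σ.1) - 1 + 1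
              = gn n r (σ.1 % r) (tk r (σ.1 % r) σ.1) from by omega]
            unfold contrib
            rw [(slot_sp n r _ _).1, (slot_sp n r _ _).2, hblk]
            omega)
          (fun v0 _ hv0 => by
            by_cases hbv : spBlk n r (spIdx n r (σ.1 % r)
                (gn n r (σ.1 % r) (tk r (σ.1 % r) σ.1))) (v0 + 1) = σ.1 % r
            · have hvne : v0 + 1 ≠ gn n r (σ.1 % r) (tk r (σ.1 % r) σ.1) := by omega
              unfold contrib
              rw [(slot_sp n r _ _).1, (slot_sp n r _ _).2, hbv, stepSt_fst,
                htk', hsb.1, hsb.2, hμ']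
              omega
            · exact contrib_step_other n r hr σ a (v0 + 1) _ (by
                rw [(slot_sp n r _ _).1]; exact hbv))]
        rw [if_pos rfl,
          if_neg (fun h => own_ne_sp n r (σ.1 % r) (1 - (a : ℕ)) _ hB (by omega) h.symm)]
      · rw [reprN_congr n r q σ (stepSt n r σ a) _ (fun v0 _ => by
          by_cases hbv : spBlk n r j (v0 + 1) = σ.1 % r
          · have hvne : v0 + 1 ≠ gn n r (σ.1 % r) (tk r (σ.1 % r) σ.1) := by
              intro hveq
              apply hjsp
              rw [← spIdx_spBlk n r j (v0 + 1) hr (by omega), hbv, hveq]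
            unfold contrib
            rw [(slot_sp n r (v0 + 1) j).1, (slot_sp n r (v0 + 1) j).2, hbv, stepSt_fst,
              htk', hsb.1, hsb.2, hμ']
            omega
          · exact contrib_step_other n r hr σ a (v0 + 1) _ (by
              rw [(slot_sp n r (v0 + 1) j).1]; exact hbv))]
        rw [if_neg (fun h => hjsp (spCell_inj n r h)),
          if_neg (fun h => own_ne_sp n r (σ.1 % r) (1 - (a : ℕ)) j hB (by omega) h.symm)]
        omega


theorem sum_ind (n : ℕ) (c0 : ℕ) (h : c0 < n) :
    (∑ c ∈ Finset.range n, if c = c0 then (1:ℕ) else 0) = 1 := by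
  rw [Finset.sum_ite_eq' (Finset.range n) c0 (fun _ => (1:ℕ))]
  rw [if_pos (Finset.mem_range.2 h)]

theorem slotCell_lt (n r b v p : ℕ) (hr : 0 < r) (hrn : r ≤ n) (hb : b < r)
    (hp : p ≤ s0 n r ∨ spIdx n r b v < e0 n r) : slotCell n r b v p < n := by
  unfold slotCell; split_ifs with h
  · exact ownCell_lt n r b p hr hrn hb h
  · rcases hp with hp | hp
    · exact absurd hp h
    · exact spCell_lt n r _ hr hrn hp

/-- total increment of the representation under one step. -/
theorem sum_step (n r q : ℕ) (hr : 0 < r) (hm : r ≤ n - r) (hq : 2 ≤ q)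
    (σ : ℕ × (ℕ → ℕ)) (a : Fin 2) (hval : ValidSt n r q σ)
    (hτ : σ.1 < (q - 1) * (n - r)) :
    ∑ c ∈ Finset.range n, reprN n r q (stepSt n r σ a) c = Gfun n r q (σ.1 + 1) := by
  have hB : σ.1 % r < r := Nat.mod_lt _ hr
  have hrn : r ≤ n := by omega
  have ha2 : (a : ℕ) < 2 := a.isLt
  have hs1 : 1 ≤ s0 n r := s0_pos n r hr hm
  rw [Gfun_succ n r q σ.1 hr hm, ← hval.2.2.2]
  by_cases hi0 : tk r (σ.1 % r) σ.1 = 0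
  · rw [Finset.sum_congr rfl (fun c hc =>
      diff_virgin n r q hr hm hq σ a hi0 c (Finset.mem_range.1 hc))]
    rw [Finset.sum_add_distrib, sum_ind n _
      (ownCell_lt n r (σ.1 % r) (1 - (a : ℕ)) hr hrn hB (by omega))]
    rw [if_pos hi0]
  · have hi : 0 < tk r (σ.1 % r) σ.1 := by omega
    have hgq : gn n r (σ.1 % r) (tk r (σ.1 % r) σ.1) ≤ q - 1 :=
      gn_le_q n r q (σ.1 % r) _ hr hm hB hi (tk_le_lam n r q (σ.1 % r) σ.1 hval.1)
    have hg1 : 1 ≤ gn n r (σ.1 % r) (tk r (σ.1 % r) σ.1) := gn_pos n r (σ.1 % r) _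
    have hμJ : σ.2 (σ.1 % r) ≤ jj n r (σ.1 % r) (tk r (σ.1 % r) σ.1) :=
      (hval.2.2.1 (σ.1 % r) hB).2 hi
    have hlen := len_bounds n r (σ.1 % r) (gn n r (σ.1 % r) (tk r (σ.1 % r) σ.1)) hr hm hB hg1
    by_cases hbdj : jj n r (σ.1 % r) (tk r (σ.1 % r) σ.1)
        = len n r (σ.1 % r) (gn n r (σ.1 % r) (tk r (σ.1 % r) σ.1))
    · -- boundary
      rw [Finset.sum_congr rfl (fun c hc =>
        diff_bdry n r q hr hm hq σ a hval hτ hi hbdj c (Finset.mem_range.1 hc))]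
      rw [Finset.sum_add_distrib, Finset.sum_add_distrib]
      have hfill : slotCell n r (σ.1 % r) (gn n r (σ.1 % r) (tk r (σ.1 % r) σ.1))
          (σ.2 (σ.1 % r)) < n := by
        apply slotCell_lt n r _ _ _ hr hrn hB
        by_cases hμc : σ.2 (σ.1 % r) ≤ s0 n r
        · exact Or.inl hμc
        · right
          have hle := len_eq n r (σ.1 % r) (gn n r (σ.1 % r) (tk r (σ.1 % r) σ.1)) hr hm hB hg1
          by_contra hcon
          rw [if_neg hcon] at hle
          omega
      rw [sum_ind n _ hfill, sum_ind n _
        (ownCell_lt n r (σ.1 % r) (1 - (a : ℕ)) hr hrn hB (by omega))]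
      rw [if_neg hi0, if_pos hbdj]
    · -- mid round
      have hmid : jj n r (σ.1 % r) (tk r (σ.1 % r) σ.1)
          < len n r (σ.1 % r) (gn n r (σ.1 % r) (tk r (σ.1 % r) σ.1)) := by
        have := jj_le_len n r (σ.1 % r) (tk r (σ.1 % r) σ.1) hr hm hB hi
        omega
      rw [if_neg hi0, if_neg hbdj]
      by_cases ha1 : (a : ℕ) = 1
      · rw [Finset.sum_congr rfl (fun c hc =>
          diff_mid1 n r q hr hm hq σ a ha1 hval hi hmid c (Finset.mem_range.1 hc))]
        rw [Finset.sum_add_distrib, sum_ind n _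
          (ownCell_lt n r (σ.1 % r) (σ.2 (σ.1 % r)) hr hrn hB (by omega))]
      · have ha0 : (a : ℕ) = 0 := by omega
        rw [Finset.sum_congr rfl (fun c hc =>
          diff_mid0 n r q hr hm hq σ a ha0 hval hi hmid c (Finset.mem_range.1 hc))]
        have htarg : slotCell n r (σ.1 % r) (gn n r (σ.1 % r) (tk r (σ.1 % r) σ.1))
            (jj n r (σ.1 % r) (tk r (σ.1 % r) σ.1) + 1) < n := by
          apply slotCell_lt n r _ _ _ hr hrn hB
          by_cases hJt : jj n r (σ.1 % r) (tk r (σ.1 % r) σ.1) + 1 ≤ s0 n r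
          · exact Or.inl hJt
          · right
            have hle := len_eq n r (σ.1 % r) (gn n r (σ.1 % r) (tk r (σ.1 % r) σ.1)) hr hm hB hg1
            by_contra hcon
            rw [if_neg hcon] at hle
            omega
        rw [Finset.sum_add_distrib, sum_ind n _ htarg]

/-- one step only increases the representation pointwise. -/
theorem mono_step (n r q : ℕ) (hr : 0 < r) (hm : r ≤ n - r) (hq : 2 ≤ q)
    (σ : ℕ × (ℕ → ℕ)) (a : Fin 2) (hval : ValidSt n r q σ)
    (hτ : σ.1 < (q - 1) * (n - r)) (c : ℕ) (hc : c < n) :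
    reprN n r q σ c ≤ reprN n r q (stepSt n r σ a) c := by
  have hB : σ.1 % r < r := Nat.mod_lt _ hr
  by_cases hi0 : tk r (σ.1 % r) σ.1 = 0
  · rw [diff_virgin n r q hr hm hq σ a hi0 c hc]; omega
  · have hi : 0 < tk r (σ.1 % r) σ.1 := by omega
    by_cases hbdj : jj n r (σ.1 % r) (tk r (σ.1 % r) σ.1)
        = len n r (σ.1 % r) (gn n r (σ.1 % r) (tk r (σ.1 % r) σ.1))
    · rw [diff_bdry n r q hr hm hq σ a hval hτ hi hbdj c hc]; omega
    · have hmid : jj n r (σ.1 % r) (tk r (σ.1 % r) σ.1)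
          < len n r (σ.1 % r) (gn n r (σ.1 % r) (tk r (σ.1 % r) σ.1)) := by
        have := jj_le_len n r (σ.1 % r) (tk r (σ.1 % r) σ.1) hr hm hB hi
        omega
      by_cases ha1 : (a : ℕ) = 1
      · rw [diff_mid1 n r q hr hm hq σ a ha1 hval hi hmid c hc]; omega
      · have ha0 : (a : ℕ) = 0 := by omega
        rw [diff_mid0 n r q hr hm hq σ a ha0 hval hi hmid c hc]; omega

theorem valid_step (n r q : ℕ) (hr : 0 < r) (hm : r ≤ n - r) (hq : 2 ≤ q)
    (σ : ℕ × (ℕ → ℕ)) (a : Fin 2) (hval : ValidSt n r q σ)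
    (hτ : σ.1 < (q - 1) * (n - r)) :
    ValidSt n r q (stepSt n r σ a) := by
  have hB : σ.1 % r < r := Nat.mod_lt _ hr
  have ha2 : (a : ℕ) < 2 := a.isLt
  have htk' : tk r (σ.1 % r) (σ.1 + 1) = tk r (σ.1 % r) σ.1 + 1 := tk_step_self n r σ hr
  refine ⟨by rw [stepSt_fst]; omega, ?_, ?_, ?_⟩
  · intro b hb
    rw [stepSt_snd_other n r σ a b (by omega)]
    exact hval.2.1 b hb
  · intro b hb
    by_cases hbB : b = σ.1 % r
    · subst hbB
      rw [stepSt_fst, stepSt_snd_self, htk']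
      constructor
      · intro h; omega
      · intro _
        by_cases hbd : isBd n r σ
        · rw [newMu_bd n r σ a hbd]
          have hjj1 : jj n r (σ.1 % r) (tk r (σ.1 % r) σ.1 + 1) = 1 := by
            rcases hbd with hbd | hbd
            · rw [hbd, show (0:ℕ) + 1 = 1 from rfl]
              exact jj_one n r (σ.1 % r) hr hm hB
            · rcases Nat.eq_zero_or_pos (tk r (σ.1 % r) σ.1) with h0 | h0
              · rw [h0, show (0:ℕ) + 1 = 1 from rfl]
                exact jj_one n r (σ.1 % r) hr hm hB
              · exact (step_bdry n r (σ.1 % r) (tk r (σ.1 % r) σ.1) hr hm hB h0 hbd).2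
          rw [hjj1]
          omega
        · have hi : 0 < tk r (σ.1 % r) σ.1 := by
            rcases Nat.eq_zero_or_pos (tk r (σ.1 % r) σ.1) with h0 | h0
            · exact absurd (Or.inl h0) hbd
            · exact h0
          have hmid : jj n r (σ.1 % r) (tk r (σ.1 % r) σ.1)
              < len n r (σ.1 % r) (gn n r (σ.1 % r) (tk r (σ.1 % r) σ.1)) := by
            have h1 := jj_le_len n r (σ.1 % r) (tk r (σ.1 % r) σ.1) hr hm hB hi
            have h2 : ¬ (jj n r (σ.1 % r) (tk r (σ.1 % r) σ.1)
                = len n r (σ.1 % r) (gn n r (σ.1 % r) (tk r (σ.1 % r) σ.1))) :=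
              fun h => hbd (Or.inr h)
            omega
          have hsm := step_mid n r (σ.1 % r) (tk r (σ.1 % r) σ.1) hr hm hB hi hmid
          rw [hsm.2]
          by_cases ha1 : (a : ℕ) = 1
          · rw [newMu_mid1 n r σ a hbd ha1]
          · rw [newMu_mid0 n r σ a hbd (by omega)]
            have := (hval.2.2.1 (σ.1 % r) hB).2 hi
            omega
    · rw [stepSt_fst, stepSt_snd_other n r σ a b hbB,
        tk_step_other n r σ hr b hb hbB]
      exact hval.2.2.1 b hb
  · rw [stepSt_fst]
    exact sum_step n r q hr hm hq σ a hval hτ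


theorem disp_step_self (n r q : ℕ) (hr : 0 < r) (hm : r ≤ n - r)
    (σ : ℕ × (ℕ → ℕ)) (a : Fin 2) (hval : ValidSt n r q σ) :
    disp n r (stepSt n r σ a) (σ.1 % r) = a := by
  have hB : σ.1 % r < r := Nat.mod_lt _ hr
  have ha2 : (a : ℕ) < 2 := a.isLt
  have htk' : tk r (σ.1 % r) (σ.1 + 1) = tk r (σ.1 % r) σ.1 + 1 := tk_step_self n r σ hr
  unfold disp
  rw [stepSt_fst, stepSt_snd_self, htk']
  by_cases hbd : isBd n r σ
  · rw [newMu_bd n r σ a hbd]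
    have hjj1 : jj n r (σ.1 % r) (tk r (σ.1 % r) σ.1 + 1) = 1 := by
      rcases hbd with hbd | hbd
      · rw [hbd, show (0:ℕ) + 1 = 1 from rfl]
        exact jj_one n r (σ.1 % r) hr hm hB
      · rcases Nat.eq_zero_or_pos (tk r (σ.1 % r) σ.1) with h0 | h0
        · rw [h0, show (0:ℕ) + 1 = 1 from rfl]
          exact jj_one n r (σ.1 % r) hr hm hB
        · exact (step_bdry n r (σ.1 % r) (tk r (σ.1 % r) σ.1) hr hm hB h0 hbd).2
    rw [hjj1]
    by_cases ha1 : (a : ℕ) = 1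
    · rw [if_pos ⟨by omega, by omega⟩]
      have : a = 1 := by
        apply Fin.ext
        simp only [Fin.val_one]
        exact ha1
      rw [this]
    · rw [if_neg (by omega : ¬ (0 < tk r (σ.1 % r) σ.1 + 1 ∧ (a:ℕ) = 1))]
      have : a = 0 := by
        apply Fin.ext
        simp only [Fin.val_zero]
        omega
      rw [this]
  · have hi : 0 < tk r (σ.1 % r) σ.1 := by
      rcases Nat.eq_zero_or_pos (tk r (σ.1 % r) σ.1) with h0 | h0
      · exact absurd (Or.inl h0) hbd
      · exact h0
    have hmid : jj n r (σ.1 % r) (tk r (σ.1 % r) σ.1)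
        < len n r (σ.1 % r) (gn n r (σ.1 % r) (tk r (σ.1 % r) σ.1)) := by
      have h1 := jj_le_len n r (σ.1 % r) (tk r (σ.1 % r) σ.1) hr hm hB hi
      exact lt_of_le_of_ne h1 (fun h => hbd (Or.inr h))
    have hsm := step_mid n r (σ.1 % r) (tk r (σ.1 % r) σ.1) hr hm hB hi hmid
    rw [hsm.2]
    by_cases ha1 : (a : ℕ) = 1
    · rw [newMu_mid1 n r σ a hbd ha1]
      rw [if_pos ⟨by omega, rfl⟩]
      have : a = 1 := by
        apply Fin.ext
        simp only [Fin.val_one]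
        exact ha1
      rw [this]
    · rw [newMu_mid0 n r σ a hbd (by omega)]
      have hμJ : σ.2 (σ.1 % r) ≤ jj n r (σ.1 % r) (tk r (σ.1 % r) σ.1) :=
        (hval.2.2.1 (σ.1 % r) hB).2 hi
      rw [if_neg (by omega : ¬ (0 < tk r (σ.1 % r) σ.1 + 1
        ∧ σ.2 (σ.1 % r) = jj n r (σ.1 % r) (tk r (σ.1 % r) σ.1) + 1))]
      have : a = 0 := by
        apply Fin.ext
        simp only [Fin.val_zero]
        omega
      rw [this]

theorem disp_step_other (n r : ℕ) (hr : 0 < r) (σ : ℕ × (ℕ → ℕ)) (a : Fin 2) (b : ℕ)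
    (hb : b < r) (hne : b ≠ σ.1 % r) :
    disp n r (stepSt n r σ a) b = disp n r σ b := by
  unfold disp
  rw [stepSt_fst, stepSt_snd_other n r σ a b hne, tk_step_other n r σ hr b hb hne]

theorem window_step_zero (n r q : ℕ) (hr : 0 < r) (hm : r ≤ n - r)
    (σ : ℕ × (ℕ → ℕ)) (a : Fin 2) (hval : ValidSt n r q σ) :
    windowSt n r (stepSt n r σ a) 0 = a := by
  unfold windowSt
  rw [stepSt_fst]
  rw [show σ.1 + 1 + (r - 1 - 0) = σ.1 + r from by omega, Nat.add_mod_right]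
  exact disp_step_self n r q hr hm σ a hval

theorem window_step_succ (n r q : ℕ) (hr : 0 < r) (σ : ℕ × (ℕ → ℕ)) (a : Fin 2)
    (j : ℕ) (hj1 : 1 ≤ j) (hjr : j < r) :
    windowSt n r (stepSt n r σ a) j = windowSt n r σ (j - 1) := by
  unfold windowSt
  rw [stepSt_fst]
  rw [show σ.1 + 1 + (r - 1 - j) = σ.1 + (r - 1 - (j - 1)) from by omega]
  apply disp_step_other n r hr σ a _ (Nat.mod_lt _ hr)
  -- (σ.1 + (r - j)) % r ≠ σ.1 % r
  rw [show σ.1 + (r - 1 - (j - 1)) = σ.1 + (r - j) from by omega]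
  rw [← Nat.mod_add_mod]
  have hu : σ.1 % r < r := Nat.mod_lt _ hr
  by_cases hcase : σ.1 % r + (r - j) < r
  · rw [Nat.mod_eq_of_lt hcase]
    omega
  · rw [show σ.1 % r + (r - j) = (σ.1 % r - j) + r from by omega, Nat.add_mod_right,
      Nat.mod_eq_of_lt (by omega : σ.1 % r - j < r)]
    omega

theorem lazy_window (n r : ℕ) (σ : ℕ × (ℕ → ℕ)) (a : Fin 2)
    (h : ∀ j, j < r → windowSt n r σ j = a) (j : ℕ) (hj : j < r) :
    windowSt n r σ j = a := h j hj

/-- the all-zero start state. -/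
def zeroSt : ℕ × (ℕ → ℕ) := (0, fun _ => 0)

theorem valid_zero (n r q : ℕ) (hr : 0 < r) : ValidSt n r q zeroSt := by
  unfold ValidSt zeroSt
  refine ⟨Nat.zero_le _, fun b _ => rfl,
    fun b hb => ⟨fun _ => rfl, fun _ => Nat.zero_le _⟩, ?_⟩
  rw [Gfun_zero n r q hr]
  apply Finset.sum_eq_zero
  intro c _
  exact reprN_zero n r q hr _ c

/-- representations of valid states are injective. -/
theorem repr_inj (n r q : ℕ) (hr : 0 < r) (hm : r ≤ n - r) (hq : 2 ≤ q)
    (σ σ' : ℕ × (ℕ → ℕ)) (hv : ValidSt n r q σ) (hv' : ValidSt n r q σ')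
    (he : ∀ c, c < n → reprN n r q σ c = reprN n r q σ' c) : σ = σ' := by
  have hrn : r ≤ n := by omega
  have hτ : σ.1 = σ'.1 := by
    have hsum : ∑ c ∈ Finset.range n, reprN n r q σ c
        = ∑ c ∈ Finset.range n, reprN n r q σ' c :=
      Finset.sum_congr rfl (fun c hc => he c (Finset.mem_range.1 hc))
    have : Gfun n r q σ.1 = Gfun n r q σ'.1 := by
      rw [← hv.2.2.2, ← hv'.2.2.2, hsum]
    exact (Gfun_strictMono n r q hr hm).injective this
  have hμ : σ.2 = σ'.2 := by
    funext b
    by_cases hb : b < r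
    · by_cases hi0 : tk r b σ.1 = 0
      · rw [(hv.2.2.1 b hb).1 hi0, (hv'.2.2.1 b hb).1 (by rw [← hτ]; exact hi0)]
      · have hi : 0 < tk r b σ.1 := by omega
        have hi' : 0 < tk r b σ'.1 := by rw [← hτ]; exact hi
        have hgq : gn n r b (tk r b σ.1) ≤ q - 1 :=
          gn_le_q n r q b _ hr hm hb hi (tk_le_lam n r q b σ.1 hv.1)
        have hμJ : σ.2 b ≤ jj n r b (tk r b σ.1) := (hv.2.2.1 b hb).2 hi
        have hμJ' : σ'.2 b ≤ jj n r b (tk r b σ'.1) := (hv'.2.2.1 b hb).2 hi'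
        have hg1 : 1 ≤ gn n r b (tk r b σ.1) := gn_pos n r b _
        have hlen := len_bounds n r b (gn n r b (tk r b σ.1)) hr hm hb hg1
        have hJlen := jj_le_len n r b (tk r b σ.1) hr hm hb hi
        by_contra hne
        have key : ∀ p, p ≤ s0 n r →
            reprN n r q σ (ownCell n r b p) = reprN n r q σ' (ownCell n r b p) :=
          fun p hp => he _ (ownCell_lt n r b p hr hrn hb hp)
        by_cases hμ1 : σ.2 b ≤ s0 n r
        · have h1 := key (σ.2 b) hμ1
          rw [reprN_own n r q σ b (σ.2 b) hb hμ1 hi hgq,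
            reprN_own n r q σ' b (σ.2 b) hb hμ1 hi' (by rw [← hτ]; exact hgq)] at h1
          rw [← hτ] at h1
          rw [if_neg (by omega : ¬ (σ.2 b ≤ jj n r b (tk r b σ.1) ∧ σ.2 b ≠ σ.2 b)),
            if_pos ⟨hμJ, fun h => hne (by rw [h])⟩] at h1
          omega
        · have hμ1' : σ'.2 b ≤ s0 n r := by
            rw [← hτ] at hμJ'
            omega
          have h1 := key (σ'.2 b) hμ1'
          rw [reprN_own n r q σ b (σ'.2 b) hb hμ1' hi hgq,
            reprN_own n r q σ' b (σ'.2 b) hb hμ1' hi' (by rw [← hτ]; exact hgq)] at h1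
          rw [← hτ] at h1
          rw [if_pos ⟨by omega, fun h => hne (by rw [h])⟩,
            if_neg (by omega : ¬ (σ'.2 b ≤ jj n r b (tk r b σ.1) ∧ σ'.2 b ≠ σ'.2 b))] at h1
          omega
    · rw [hv.2.1 b (by omega), hv'.2.1 b (by omega)]
  exact Prod.ext hτ hμ


/-! ### The code -/

def Pre (n r q : ℕ) (x : Fin n → Fin q) : Prop :=
  ∃ σ : ℕ × (ℕ → ℕ), ValidSt n r q σ ∧ ∀ c : Fin n, (x c : ℕ) = reprN n r q σ (c : ℕ)

open Classical in
noncomputable def DD (n r q : ℕ) : (Fin n → Fin q) → Fin r → Fin 2 := fun x j =>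
  if h : Pre n r q x then windowSt n r h.choose (j : ℕ) else 0

open Classical in
noncomputable def EE (n r q : ℕ) : Fin 2 → (Fin n → Fin q) → Option (Fin n → Fin q) :=
  fun a x =>
    if h : Pre n r q x then
      if (∀ j : Fin r, windowSt n r h.choose (j : ℕ) = a) then some x
      else if h2 : 2 ≤ q ∧ h.choose.1 < (q - 1) * (n - r) then
        some (fun c => ⟨reprN n r q (stepSt n r h.choose a) (c : ℕ), by
          have := reprN_le n r q (stepSt n r h.choose a) (c : ℕ)
          omega⟩)
      else none
    else none

theorem choose_eq (n r q : ℕ) (hr : 0 < r) (hm : r ≤ n - r) (hq : 2 ≤ q)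
    {x : Fin n → Fin q} (h : Pre n r q x) (σ : ℕ × (ℕ → ℕ)) (hv : ValidSt n r q σ)
    (hx : ∀ c : Fin n, (x c : ℕ) = reprN n r q σ (c : ℕ)) : h.choose = σ := by
  apply repr_inj n r q hr hm hq _ _ h.choose_spec.1 hv
  intro c hc
  have h1 := h.choose_spec.2 ⟨c, hc⟩
  have h2 := hx ⟨c, hc⟩
  simp only at h1 h2
  omega

end MBC

/-- For `r ≥ 1`, `q ≥ 2`, `n ≥ 2r`, there exists an `(n,r,2)_q` buffer code (binary
buffer) guaranteeing `t = (q-1)(n-r)` writes. -/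
theorem exists_multicell_buffer_code
    (n r q : ℕ) (hr : 1 ≤ r) (hq : 2 ≤ q) (hn : 2 * r ≤ n) :
    ∃ (D : (Fin n → Fin q) → (Fin r → Fin 2))
      (E : Fin 2 → (Fin n → Fin q) → Option (Fin n → Fin q)),
      IsBufferCode D E ∧ GuaranteesBuf E ((q - 1) * (n - r)) := by
  classical
  have hr0 : 0 < r := hr
  have hm : r ≤ n - r := by omega
  have hrn : r ≤ n := by omega
  -- characterize successful writes
  have EE_some : ∀ (a : Fin 2) (x y : Fin n → Fin q),
      MBC.EE n r q a x = some y →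
      ∃ h0 : MBC.Pre n r q x,
        ((∀ j : Fin r, MBC.windowSt n r h0.choose (j : ℕ) = a) ∧ y = x) ∨
        ((¬ ∀ j : Fin r, MBC.windowSt n r h0.choose (j : ℕ) = a) ∧
          h0.choose.1 < (q - 1) * (n - r) ∧
          (∀ c : Fin n, (y c : ℕ) = MBC.reprN n r q (MBC.stepSt n r h0.choose a) (c : ℕ))) := by
    intro a x y h
    unfold MBC.EE at h
    by_cases h0 : MBC.Pre n r q x
    · refine ⟨h0, ?_⟩
      rw [dif_pos h0] at h
      by_cases hw : ∀ j : Fin r, MBC.windowSt n r h0.choose (j : ℕ) = a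
      · left
        rw [if_pos hw] at h
        exact ⟨hw, (Option.some_inj.1 h).symm⟩
      · right
        rw [if_neg hw] at h
        by_cases h2 : 2 ≤ q ∧ h0.choose.1 < (q - 1) * (n - r)
        · rw [dif_pos h2] at h
          refine ⟨hw, h2.2, ?_⟩
          intro c
          rw [← Option.some_inj.1 h]
        · rw [dif_neg h2] at h
          exact absurd h (by simp)
    · rw [dif_neg h0] at h
      exact absurd h (by simp)
  refine ⟨MBC.DD n r q, MBC.EE n r q, ⟨?_, ?_, ?_⟩, ?_⟩
  · -- mono
    intro a x y h j
    obtain ⟨h0, hcase⟩ := EE_some a x y h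
    rcases hcase with ⟨_, rfl⟩ | ⟨_, hτ, hy⟩
    · exact le_refl _
    · have hx := h0.choose_spec.2 j
      have hy' := hy j
      have hmono := MBC.mono_step n r q hr0 hm hq h0.choose a h0.choose_spec.1 hτ
        (j : ℕ) j.isLt
      exact Fin.le_def.2 (by omega)
  · -- head
    intro a x y h hpos
    obtain ⟨h0, hcase⟩ := EE_some a x y h
    rcases hcase with ⟨hw, rfl⟩ | ⟨hw, hτ, hy⟩
    · unfold MBC.DD
      rw [dif_pos h0]
      exact hw ⟨0, hpos⟩
    · have h1 : MBC.Pre n r q y :=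
        ⟨MBC.stepSt n r h0.choose a,
          MBC.valid_step n r q hr0 hm hq h0.choose a h0.choose_spec.1 hτ, hy⟩
      unfold MBC.DD
      rw [dif_pos h1]
      rw [MBC.choose_eq n r q hr0 hm hq h1 (MBC.stepSt n r h0.choose a)
        (MBC.valid_step n r q hr0 hm hq h0.choose a h0.choose_spec.1 hτ) hy]
      exact MBC.window_step_zero n r q hr0 hm h0.choose a h0.choose_spec.1
  · -- shift
    intro a x y h i hlt
    obtain ⟨h0, hcase⟩ := EE_some a x y h
    rcases hcase with ⟨hw, rfl⟩ | ⟨hw, hτ, hy⟩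
    · unfold MBC.DD
      rw [dif_pos h0, dif_pos h0]
      rw [hw ⟨(i : ℕ) + 1, hlt⟩, hw i]
    · have h1 : MBC.Pre n r q y :=
        ⟨MBC.stepSt n r h0.choose a,
          MBC.valid_step n r q hr0 hm hq h0.choose a h0.choose_spec.1 hτ, hy⟩
      unfold MBC.DD
      rw [dif_pos h1, dif_pos h0]
      rw [MBC.choose_eq n r q hr0 hm hq h1 (MBC.stepSt n r h0.choose a)
        (MBC.valid_step n r q hr0 hm hq h0.choose a h0.choose_spec.1 hτ) hy]
      have := MBC.window_step_succ n r q hr0 h0.choose a ((i : ℕ) + 1) (by omega) hlt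
      rw [show ((⟨(i : ℕ) + 1, hlt⟩ : Fin r) : ℕ) = (i : ℕ) + 1 from rfl, this,
        Nat.add_sub_cancel]
  · -- guarantees
    intro x hx l hl
    -- x is the representation of the zero state
    have hx0 : ∀ c : Fin n, (x c : ℕ) = MBC.reprN n r q MBC.zeroSt (c : ℕ) := by
      intro c
      rw [hx c]
      exact (MBC.reprN_zero n r q hr0 (fun _ => 0) (c : ℕ)).symm
    clear hx
    -- general induction
    have main : ∀ (l : List (Fin 2)) (σ : ℕ × (ℕ → ℕ)), MBC.ValidSt n r q σ →
        σ.1 + l.length ≤ (q - 1) * (n - r) →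
        ∀ x : Fin n → Fin q, (∀ c : Fin n, (x c : ℕ) = MBC.reprN n r q σ (c : ℕ)) →
        CanWriteBuf (MBC.EE n r q) x l := by
      intro l
      induction l with
      | nil => intro σ _ _ x _; trivial
      | cons a l ih =>
        intro σ hσ hlen x hxσ
        have h0 : MBC.Pre n r q x := ⟨σ, hσ, hxσ⟩
        have hch : h0.choose = σ := MBC.choose_eq n r q hr0 hm hq h0 σ hσ hxσ
        by_cases hw : ∀ j : Fin r, MBC.windowSt n r h0.choose (j : ℕ) = a
        · refine ⟨x, ?_, ?_⟩
          · unfold MBC.EE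
            rw [dif_pos h0, if_pos hw]
          · exact ih σ hσ (by simp at hlen ⊢; omega) x hxσ
        · have hτ : σ.1 < (q - 1) * (n - r) := by
            simp only [List.length_cons] at hlen
            omega
          have h2 : 2 ≤ q ∧ h0.choose.1 < (q - 1) * (n - r) := by
            rw [hch]; exact ⟨hq, hτ⟩
          refine ⟨fun c => ⟨MBC.reprN n r q (MBC.stepSt n r h0.choose a) (c : ℕ), by
              have := MBC.reprN_le n r q (MBC.stepSt n r h0.choose a) (c : ℕ)
              omega⟩, ?_, ?_⟩
          · unfold MBC.EE
            rw [dif_pos h0, if_neg hw, dif_pos h2]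
          · apply ih (MBC.stepSt n r h0.choose a)
            · rw [hch]
              exact MBC.valid_step n r q hr0 hm hq σ a hσ hτ
            · rw [hch, MBC.stepSt_fst]
              simp only [List.length_cons] at hlen
              omega
            · intro c
              rfl
        
    exact main l MBC.zeroSt (MBC.valid_zero n r q hr0)
      (by simp only [MBC.zeroSt]; omega) x hx0
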